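/- arXiv:1702.00931 — 4 statements merged into one kernel-verified Lean document; each statement's English description precedes it below -/
import Mathlib

section
/- Uniform convergence of discrete resolvent sums to the continuous integral: let 0 < λ_min ≤ C and γ_k := c_γ k^{-α} with c_γ > 0 and α ∈ (1/2,1). Then there exists a sequence of positive reals (a_n) with a_n → 0, depending only on α, c_γ, λ_min and C, such that for all n ≥ 1 and all λ, λ' ∈ [λ_min, C], | (1/γ_n) ∑_{k=1}^n γ_k² ∏_{j=k+1}^n (1 − γ_j λ)(1 − γ_j λ') − 1/(λ + λ') | ≤ a_n. (Note 1/(λ+λ') = ∫_0^∞ e^{-(λ+λ')s} ds.) -/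
open Filter
open scoped Topology BigOperators

lemma aux_rec_tendsto_zero (g e W : ℕ → ℝ) (hW0 : 0 ≤ W 0)
    (hWs : ∀ k, W (k+1) = (1 - g k) * W k + g k * e k)
    (hg0 : ∀ k, 0 ≤ g k) (hg1 : ∀ k, g k ≤ 1) (he0 : ∀ k, 0 ≤ e k)
    (he : Tendsto e atTop (𝓝 0))
    (hgsum : Tendsto (fun n => ∑ i ∈ Finset.range n, g i) atTop atTop) :
    Tendsto W atTop (𝓝 0) := by
  have hWnn : ∀ k, 0 ≤ W k := by
    intro k
    induction k with
    | zero => exact hW0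
    | succ k ih =>
      rw [hWs k]
      have h1 : 0 ≤ 1 - g k := by linarith [hg1 k]
      have := mul_nonneg h1 ih
      have := mul_nonneg (hg0 k) (he0 k)
      linarith
  rw [Metric.tendsto_atTop]
  intro ε hε
  obtain ⟨M, hM⟩ : ∃ M, ∀ m ≥ M, e m < ε/2 := by
    have := he.eventually_lt_const (by positivity : (0:ℝ) < ε/2)
    exact eventually_atTop.1 this
  have key : ∀ m, M ≤ m → W m ≤ ε/2 + (∏ i ∈ Finset.Ico M m, (1 - g i)) * W M := by
    intro m hm
    induction m, hm using Nat.le_induction with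
    | base => simp; positivity
    | succ m hm ih =>
      rw [hWs m, Finset.prod_Ico_succ_top hm]
      have h1 : 0 ≤ 1 - g m := by linarith [hg1 m]
      have h2 : g m * e m ≤ g m * (ε/2) :=
        mul_le_mul_of_nonneg_left (le_of_lt (hM m hm)) (hg0 m)
      calc (1 - g m) * W m + g m * e m
          ≤ (1 - g m) * (ε/2 + (∏ i ∈ Finset.Ico M m, (1 - g i)) * W M) + g m * (ε/2) :=
            add_le_add (mul_le_mul_of_nonneg_left ih h1) h2
        _ = ε/2 + ((∏ i ∈ Finset.Ico M m, (1 - g i)) * (1 - g m)) * W M := by ring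
  have hprod : Tendsto (fun m => (∏ i ∈ Finset.Ico M m, (1 - g i)) * W M) atTop (𝓝 0) := by
    have hPle : ∀ m, (∏ i ∈ Finset.Ico M m, (1 - g i)) ≤ Real.exp (-(∑ i ∈ Finset.Ico M m, g i)) := by
      intro m
      rw [← Finset.sum_neg_distrib, Real.exp_sum]
      apply Finset.prod_le_prod
      · intro i _; linarith [hg1 i]
      · intro i _; linarith [Real.add_one_le_exp (-g i)]
    have hPnn : ∀ m, 0 ≤ (∏ i ∈ Finset.Ico M m, (1 - g i)) := by
      intro m
      apply Finset.prod_nonneg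
      intro i _; linarith [hg1 i]
    have hsum2 : Tendsto (fun m => ∑ i ∈ Finset.Ico M m, g i) atTop atTop := by
      apply Tendsto.congr' (f₁ := fun m => ∑ i ∈ Finset.range m, g i - ∑ i ∈ Finset.range M, g i)
      · filter_upwards [eventually_ge_atTop M] with m hm
        exact (Finset.sum_Ico_eq_sub g hm).symm
      · exact tendsto_atTop_add_const_right _ _ hgsum
    have hexp : Tendsto (fun m => Real.exp (-(∑ i ∈ Finset.Ico M m, g i))) atTop (𝓝 0) :=
      Real.tendsto_exp_atBot.comp (tendsto_neg_atBot_iff.2 hsum2)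
    have : Tendsto (fun m => (∏ i ∈ Finset.Ico M m, (1 - g i))) atTop (𝓝 0) := by
      apply tendsto_of_tendsto_of_tendsto_of_le_of_le' tendsto_const_nhds hexp
      · filter_upwards with m using hPnn m
      · filter_upwards with m using hPle m
    simpa using this.mul_const (W M)
  obtain ⟨N, hN⟩ : ∃ N, ∀ m ≥ N, (∏ i ∈ Finset.Ico M m, (1 - g i)) * W M < ε/2 := by
    have := hprod.eventually_lt_const (by positivity : (0:ℝ) < ε/2)
    exact eventually_atTop.1 this
  refine ⟨max M N, fun m hm => ?_⟩
  have h1 := key m (le_trans (le_max_left _ _) hm)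
  have h2 := hN m (le_trans (le_max_right _ _) hm)
  rw [Real.dist_eq, sub_zero, abs_of_nonneg (hWnn m)]
  linarith

lemma aux_quad_bound (x y z : ℝ) (hzx : z ≤ x) (hzy : z ≤ y) (hx : x ≤ 1) (hy0 : 0 ≤ y) :
    (1-x)*(1-y) ≤ 1 - z := by nlinarith

lemma aux_contr_bound (z N : ℝ) (hz0 : 0 ≤ z) (hN : 0 < N) (hNz : 4 ≤ N*z) :
    (1 - z)*(1 + 2/N) ≤ 1 - z/2 := by
  have h2N : 2/N ≤ z/2 := by
    rw [div_le_div_iff₀ hN two_pos]; nlinarith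
  have hzN : 0 ≤ z*(2/N) := mul_nonneg hz0 (by positivity)
  have hexp : (1-z)*(1+2/N) = 1 + 2/N - z - z*(2/N) := by ring
  linarith

set_option maxHeartbeats 2000000 in
/-- **Uniform convergence of discrete resolvent sums to the continuous integral**
(Lemma B.1): for `γ_k = c_γ k^{-α}` with `α ∈ (1/2,1)`, there is a positive sequence
`a_n → 0` such that for all `n ≥ 1` and all `λ, λ' ∈ [λ_min, C]`,
`|(1/γ_n) ∑_{k=1}^n γ_k² ∏_{j=k+1}^n (1-γ_j λ)(1-γ_j λ') - 1/(λ+λ')| ≤ a_n`. -/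
theorem resolvent_sum_uniform_convergence
    (cγ α lmin C : ℝ) (hcγ : 0 < cγ) (hα₁ : 1/2 < α) (hα₂ : α < 1)
    (hlmin : 0 < lmin) (hlC : lmin ≤ C)
    (γ : ℕ → ℝ) (hγ : ∀ k, γ k = cγ * (k : ℝ) ^ (-α)) :
    ∃ a : ℕ → ℝ, (∀ n, 0 < a n) ∧ Tendsto a atTop (𝓝 0) ∧
      ∀ n : ℕ, 1 ≤ n → ∀ lam ∈ Set.Icc lmin C, ∀ lam' ∈ Set.Icc lmin C,
        |(1 / γ n) * ∑ k ∈ Finset.Icc 1 n, (γ k) ^ 2 *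
            ∏ j ∈ Finset.Icc (k+1) n, ((1 - γ j * lam) * (1 - γ j * lam'))
          - 1 / (lam + lam')| ≤ a n := by
  have hα0 : 0 < α := by linarith
  have hC : 0 < C := lt_of_lt_of_le hlmin hlC
  -- basic facts about γ
  have hγ0 : ∀ k : ℕ, 0 ≤ γ k := by
    intro k; rw [hγ]
    exact mul_nonneg hcγ.le (Real.rpow_nonneg (Nat.cast_nonneg k) _)
  have hγpos : ∀ k : ℕ, 1 ≤ k → 0 < γ k := by
    intro k hk; rw [hγ]
    have : (0:ℝ) < (k:ℝ) := by exact_mod_cast hk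
    exact mul_pos hcγ (Real.rpow_pos_of_pos this _)
  have hrpow_anti : ∀ x y : ℝ, 1 ≤ x → x ≤ y → y ^ (-α) ≤ x ^ (-α) := by
    intro x y hx hxy
    have hx0 : (0:ℝ) < x := lt_of_lt_of_le one_pos hx
    have hy0 : (0:ℝ) < y := lt_of_lt_of_le hx0 hxy
    rw [Real.rpow_neg hx0.le, Real.rpow_neg hy0.le]
    exact inv_anti₀ (Real.rpow_pos_of_pos hx0 _) (Real.rpow_le_rpow hx0.le hxy hα0.le)
  have hγle : ∀ k : ℕ, 1 ≤ k → γ k ≤ cγ := by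
    intro k hk; rw [hγ]
    have h1 : ((k:ℝ)) ^ (-α) ≤ (1:ℝ) ^ (-α) := hrpow_anti 1 k le_rfl (by exact_mod_cast hk)
    rw [Real.one_rpow] at h1
    calc cγ * (k:ℝ) ^ (-α) ≤ cγ * 1 := mul_le_mul_of_nonneg_left h1 hcγ.le
      _ = cγ := mul_one cγ
  have hγanti : ∀ j k : ℕ, 1 ≤ j → j ≤ k → γ k ≤ γ j := by
    intro j k hj hjk
    rw [hγ, hγ]
    exact mul_le_mul_of_nonneg_left
      (hrpow_anti j k (by exact_mod_cast hj) (by exact_mod_cast hjk)) hcγ.le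
  -- tendsto facts
  have hT1 : Tendsto γ atTop (𝓝 0) := by
    have h0 : Tendsto (fun k:ℕ => cγ * (k:ℝ) ^ (-α)) atTop (𝓝 0) := by
      have := ((tendsto_rpow_neg_atTop hα0).comp tendsto_natCast_atTop_atTop).const_mul cγ
      simpa using this
    exact h0.congr (fun k => (hγ k).symm)
  have hT2 : Tendsto (fun k:ℕ => (k:ℝ) * γ k) atTop atTop := by
    have h0 : Tendsto (fun k:ℕ => cγ * (k:ℝ) ^ (1-α)) atTop atTop :=
      ((tendsto_rpow_atTop (by linarith : (0:ℝ) < 1-α)).comp tendsto_natCast_atTop_atTop).const_mul_atTop hcγ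
    apply h0.congr'
    filter_upwards [eventually_ge_atTop 1] with k hk
    have hk0 : (0:ℝ) < (k:ℝ) := by exact_mod_cast hk
    rw [hγ, sub_eq_add_neg, Real.rpow_add hk0, Real.rpow_one]
    ring
  -- choose n0
  obtain ⟨n0', hn0'⟩ : ∃ n0', ∀ j ≥ n0', γ j * C ≤ 1/2 ∧ 4 ≤ lmin * ((j:ℝ) * γ j) := by
    have h1 : ∀ᶠ j : ℕ in atTop, γ j * C ≤ 1/2 := by
      have h0 : Tendsto (fun k => γ k * C) atTop (𝓝 0) := by simpa using hT1.mul_const C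
      have := h0.eventually_lt_const (by norm_num : (0:ℝ) < 1/2)
      exact this.mono (fun j hj => hj.le)
    have h2 : ∀ᶠ j : ℕ in atTop, 4 ≤ lmin * ((j:ℝ) * γ j) :=
      (hT2.const_mul_atTop hlmin).eventually_ge_atTop 4
    exact eventually_atTop.1 (h1.and h2)
  set n0 : ℕ := max n0' 2 with hn0def
  have hn02 : 2 ≤ n0 := le_max_right _ _
  have hcond : ∀ j, n0 ≤ j → γ j * C ≤ 1/2 ∧ 4 ≤ lmin * ((j:ℝ) * γ j) :=
    fun j hj => hn0' j (le_trans (le_max_left _ _) hj)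
  set β : ℝ := lmin / 2 with hβdef
  have hβ0 : 0 < β := by positivity
  set δ : ℕ → ℝ := fun n => (1/lmin) * (1/((n:ℝ) * γ n) + γ n * C^2/2) with hδdef
  set crude : ℕ → ℝ := fun n => (1/γ n) * (n:ℝ) * cγ^2 * (1+cγ*C)^(2*n) + 1/(2*lmin) with hcrudedef
  have hcrudepos : ∀ n, 0 < crude n := by
    intro n
    have h1 : 0 ≤ (1/γ n) * (n:ℝ) * cγ^2 * (1+cγ*C)^(2*n) := by
      have := hγ0 n
      positivity
    have h2 : 0 < 1/(2*lmin) := by positivity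
    simp only [hcrudedef]
    linarith
  set W : ℕ → ℝ := fun m => Nat.rec (crude (n0-1))
    (fun k Wk => (1 - β * γ (n0+k)) * Wk + β * γ (n0+k) * (δ (n0+k)/β)) m with hWdef
  have hW0 : W 0 = crude (n0-1) := rfl
  have hWs : ∀ k, W (k+1) = (1 - β * γ (n0+k)) * W k + β * γ (n0+k) * (δ (n0+k)/β) := fun k => rfl
  have hδpos : ∀ n, 1 ≤ n → 0 < δ n := by
    intro n hn
    have h1 : (0:ℝ) < (n:ℝ) := by exact_mod_cast hn
    have h2 := hγpos n hn
    simp only [hδdef]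
    positivity
  have hβγ : ∀ j, n0 ≤ j → β * γ j ≤ 1/4 := by
    intro j hj
    have h1 := (hcond j hj).1
    have h2 : γ j * lmin ≤ γ j * C := mul_le_mul_of_nonneg_left hlC (hγ0 j)
    simp only [hβdef]
    nlinarith [hγ0 j]
  have hWpos : ∀ m, 0 < W m := by
    intro m
    induction m with
    | zero => rw [hW0]; exact hcrudepos _
    | succ m ih =>
      rw [hWs m]
      have h1 := hβγ (n0+m) (Nat.le_add_right _ _)
      have h2 : 0 < γ (n0+m) := hγpos _ (by omega)
      have h3 : 0 < δ (n0+m) := hδpos _ (by omega)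
      have h4 : 0 < β * γ (n0+m) * (δ (n0+m)/β) := by positivity
      nlinarith
  -- W tends to zero
  have hWtend : Tendsto W atTop (𝓝 0) := by
    apply aux_rec_tendsto_zero (fun k => β * γ (n0+k)) (fun k => δ (n0+k)/β) W (hWpos 0).le hWs
    · intro k; exact mul_nonneg hβ0.le (hγ0 _)
    · intro k; linarith [hβγ (n0+k) (Nat.le_add_right _ _)]
    · intro k; exact div_nonneg (hδpos _ (by omega)).le hβ0.le
    · have hδt : Tendsto δ atTop (𝓝 0) := by
        have h1 : Tendsto (fun n:ℕ => ((n:ℝ)*γ n)⁻¹) atTop (𝓝 0) := hT2.inv_tendsto_atTop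
        have h2 : Tendsto (fun n:ℕ => γ n * C^2/2) atTop (𝓝 0) := by
          simpa using (hT1.mul_const (C^2)).div_const 2
        have h3 : Tendsto (fun n:ℕ => (1/lmin) * (((n:ℝ)*γ n)⁻¹ + γ n * C^2/2)) atTop (𝓝 0) := by
          simpa using (h1.add h2).const_mul (1/lmin)
        exact h3.congr (fun n => by simp only [hδdef, one_div])
      have hcomp : Tendsto (fun k:ℕ => n0+k) atTop atTop := by
        simpa [add_comm] using tendsto_add_atTop_nat n0
      have := (hδt.comp hcomp).div_const β
      simpa using this
    · have hns : ¬ Summable (fun i : ℕ => β * γ (n0+i)) := by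
        intro h
        have h2 : Summable (fun i : ℕ => γ (n0+i)) := (summable_mul_left_iff hβ0.ne').1 h
        have h3 : Summable (fun i : ℕ => γ (i+n0)) := by
          apply h2.congr; intro i; rw [add_comm]
        have h4 : Summable γ := (summable_nat_add_iff n0).1 h3
        have h5 : Summable (fun n : ℕ => cγ * (1/(n:ℝ)^α)) :=
          h4.congr (fun n => by rw [hγ, Real.rpow_neg (Nat.cast_nonneg n), one_div])
        have h6 : Summable (fun n:ℕ => 1/(n:ℝ)^α) := (summable_mul_left_iff hcγ.ne').1 h5
        have := Real.summable_one_div_nat_rpow.1 h6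
        linarith
      have hnn : ∀ i:ℕ, 0 ≤ β * γ (n0+i) := fun i => mul_nonneg hβ0.le (hγ0 _)
      exact (not_summable_iff_tendsto_nat_atTop_of_nonneg hnn).1 hns
  -- crude bound, valid for every n ≥ 1
  have hcrude_bd : ∀ n, 1 ≤ n → ∀ lam ∈ Set.Icc lmin C, ∀ lam' ∈ Set.Icc lmin C,
      |(1 / γ n) * ∑ k ∈ Finset.Icc 1 n, (γ k) ^ 2 *
          ∏ j ∈ Finset.Icc (k+1) n, ((1 - γ j * lam) * (1 - γ j * lam'))
        - 1 / (lam + lam')| ≤ crude n := by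
    intro n hn lam hlam lam' hlam'
    obtain ⟨hl1, hl2⟩ := hlam; obtain ⟨hl1', hl2'⟩ := hlam'
    have habs1 : ∀ j:ℕ, 1 ≤ j → ∀ l:ℝ, lmin ≤ l → l ≤ C → |1 - γ j * l| ≤ 1 + cγ*C := by
      intro j hj l h1 h2
      have h3 : 0 ≤ γ j * l := mul_nonneg (hγ0 j) (le_trans hlmin.le h1)
      have h4 : γ j * l ≤ cγ * C := mul_le_mul (hγle j hj) h2 (le_trans hlmin.le h1) hcγ.le
      rw [abs_le]; constructor <;> nlinarith
    have honele : (1:ℝ) ≤ 1 + cγ*C := by nlinarith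
    have hterm : ∀ k ∈ Finset.Icc 1 n,
        |(γ k)^2 * ∏ j ∈ Finset.Icc (k+1) n, ((1 - γ j * lam) * (1 - γ j * lam'))|
          ≤ cγ^2 * (1+cγ*C)^(2*n) := by
      intro k hk
      rw [Finset.mem_Icc] at hk
      rw [abs_mul]
      have hsq : |(γ k)^2| ≤ cγ^2 := by
        rw [abs_of_nonneg (sq_nonneg _)]
        exact pow_le_pow_left₀ (hγ0 k) (hγle k hk.1) 2
      have hp : |∏ j ∈ Finset.Icc (k+1) n, ((1 - γ j * lam) * (1 - γ j * lam'))|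
          ≤ (1+cγ*C)^(2*n) := by
        rw [Finset.abs_prod]
        calc ∏ j ∈ Finset.Icc (k+1) n, |(1 - γ j * lam) * (1 - γ j * lam')|
            ≤ ∏ _j ∈ Finset.Icc (k+1) n, (1+cγ*C)^2 := by
              apply Finset.prod_le_prod (fun j _ => abs_nonneg _)
              intro j hj
              rw [Finset.mem_Icc] at hj
              have hj1 : 1 ≤ j := by omega
              rw [abs_mul, sq]
              exact mul_le_mul (habs1 j hj1 lam hl1 hl2) (habs1 j hj1 lam' hl1' hl2')
                (abs_nonneg _) (by linarith)
          _ = ((1+cγ*C)^2)^((Finset.Icc (k+1) n).card) := Finset.prod_const _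
          _ = (1+cγ*C)^(2*(Finset.Icc (k+1) n).card) := by rw [← pow_mul]
          _ ≤ (1+cγ*C)^(2*n) := by
              apply pow_le_pow_right₀ honele
              rw [Nat.card_Icc]; omega
      exact mul_le_mul hsq hp (abs_nonneg _) (by positivity)
    have hsum : |∑ k ∈ Finset.Icc 1 n, (γ k) ^ 2 *
        ∏ j ∈ Finset.Icc (k+1) n, ((1 - γ j * lam) * (1 - γ j * lam'))|
        ≤ (n:ℝ) * (cγ^2 * (1+cγ*C)^(2*n)) := by
      have h1 := (Finset.abs_sum_le_sum_abs (fun k => (γ k) ^ 2 *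
        ∏ j ∈ Finset.Icc (k+1) n, ((1 - γ j * lam) * (1 - γ j * lam'))) (Finset.Icc 1 n)).trans
        (Finset.sum_le_sum hterm)
      have h2 : ∑ _k ∈ Finset.Icc 1 n, (cγ^2*(1+cγ*C)^(2*n))
          = (n:ℝ) * (cγ^2 * (1+cγ*C)^(2*n)) := by
        rw [Finset.sum_const, Nat.card_Icc, nsmul_eq_mul]
        norm_num
      rw [h2] at h1
      exact h1
    have hmu0 : 0 < lam + lam' := by linarith
    have hmu : 1/(lam+lam') ≤ 1/(2*lmin) := one_div_le_one_div_of_le (by linarith) (by linarith)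
    have hg1 : 0 ≤ 1/γ n := one_div_nonneg.2 (hγ0 n)
    have h5 : |(1/γ n) * ∑ k ∈ Finset.Icc 1 n, (γ k) ^ 2 *
          ∏ j ∈ Finset.Icc (k+1) n, ((1 - γ j * lam) * (1 - γ j * lam')) - 1/(lam+lam')|
        ≤ (1/γ n) * |∑ k ∈ Finset.Icc 1 n, (γ k) ^ 2 *
          ∏ j ∈ Finset.Icc (k+1) n, ((1 - γ j * lam) * (1 - γ j * lam'))| + 1/(lam+lam') := by
      rw [sub_eq_add_neg]
      refine (abs_add_le _ _).trans ?_
      rw [abs_neg, abs_mul, abs_of_nonneg hg1, abs_of_pos (by positivity : (0:ℝ) < 1/(lam+lam'))]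
    have h6 := mul_le_mul_of_nonneg_left hsum hg1
    have h7 : (1/γ n) * ((n:ℝ) * (cγ^2 * (1+cγ*C)^(2*n)))
        = (1/γ n) * (n:ℝ) * cγ^2 * (1+cγ*C)^(2*n) := by ring
    simp only [hcrudedef]
    linarith
  -- one-step recursion for the sum
  have hrec : ∀ lam lam' : ℝ, ∀ k:ℕ, 1 ≤ k →
      (∑ k' ∈ Finset.Icc 1 (k+1), (γ k')^2 *
        ∏ j ∈ Finset.Icc (k'+1) (k+1), ((1 - γ j * lam) * (1 - γ j * lam')))
      = ((1 - γ (k+1) * lam) * (1 - γ (k+1) * lam')) *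
        (∑ k' ∈ Finset.Icc 1 k, (γ k')^2 *
          ∏ j ∈ Finset.Icc (k'+1) k, ((1 - γ j * lam) * (1 - γ j * lam')))
        + (γ (k+1))^2 := by
    intro lam lam' k hk
    rw [Finset.sum_Icc_succ_top (by omega : 1 ≤ k+1)]
    have hemp : Finset.Icc (k+1+1) (k+1) = ∅ := Finset.Icc_eq_empty (by omega)
    rw [hemp, Finset.prod_empty, mul_one]
    congr 1
    rw [Finset.mul_sum]
    apply Finset.sum_congr rfl
    intro k' hk'
    rw [Finset.mem_Icc] at hk'
    rw [Finset.prod_Icc_succ_top (by omega : k'+1 ≤ k+1)]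
    ring
  -- main inductive estimate
  have main : ∀ lam ∈ Set.Icc lmin C, ∀ lam' ∈ Set.Icc lmin C, ∀ m:ℕ,
      |(1/γ (n0-1+m)) * ∑ k ∈ Finset.Icc 1 (n0-1+m), (γ k)^2 *
          ∏ j ∈ Finset.Icc (k+1) (n0-1+m), ((1 - γ j * lam) * (1 - γ j * lam'))
        - 1/(lam+lam')| ≤ W m := by
    intro lam hlam lam' hlam' m
    obtain ⟨hl1, hl2⟩ := hlam
    obtain ⟨hl1', hl2'⟩ := hlam'
    have hlam0 : 0 < lam := lt_of_lt_of_le hlmin hl1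
    have hlam0' : 0 < lam' := lt_of_lt_of_le hlmin hl1'
    have hμ0 : 0 < lam + lam' := by linarith
    induction m with
    | zero =>
      rw [Nat.add_zero, hW0]
      exact hcrude_bd (n0-1) (by omega) lam ⟨hl1, hl2⟩ lam' ⟨hl1', hl2'⟩
    | succ m ih =>
      have hstep : n0 - 1 + (m+1) = (n0-1+m)+1 := by omega
      rw [hstep]
      set n := n0 - 1 + m with hndef
      have hn1 : 1 ≤ n := by omega
      have hnn0 : n0 ≤ n + 1 := by omega
      have hG : 0 < γ (n+1) := hγpos _ (by omega)
      have hG' : 0 < γ n := hγpos _ hn1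
      have hGC : γ (n+1) * C ≤ 1/2 := (hcond (n+1) hnn0).1
      have hG4 : 4 ≤ lmin * ((((n+1):ℕ):ℝ) * γ (n+1)) := (hcond (n+1) hnn0).2
      have hGl : γ (n+1) * lam ≤ 1/2 :=
        le_trans (mul_le_mul_of_nonneg_left hl2 hG.le) hGC
      have hGl' : γ (n+1) * lam' ≤ 1/2 :=
        le_trans (mul_le_mul_of_nonneg_left hl2' hG.le) hGC
      have hGlmin : γ (n+1) * lmin ≤ γ (n+1) * lam := mul_le_mul_of_nonneg_left hl1 hG.le
      have hGlmin' : γ (n+1) * lmin ≤ γ (n+1) * lam' := mul_le_mul_of_nonneg_left hl1' hG.le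
      have hGlmin0 : 0 ≤ γ (n+1) * lmin := mul_nonneg hG.le hlmin.le
      have hGl0 : 0 ≤ γ (n+1) * lam := mul_nonneg hG.le hlam0.le
      have hGl0' : 0 ≤ γ (n+1) * lam' := mul_nonneg hG.le hlam0'.le
      have hQ0 : 0 ≤ (1 - γ (n+1) * lam) * (1 - γ (n+1) * lam') :=
        mul_nonneg (by linarith) (by linarith)
      have hQle : (1 - γ (n+1) * lam) * (1 - γ (n+1) * lam') ≤ 1 - γ (n+1) * lmin :=
        aux_quad_bound _ _ _ hGlmin hGlmin' (by linarith) (by linarith)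
      -- ratio bounds
      have hR1 : 1 ≤ γ n / γ (n+1) := by
        rw [le_div_iff₀ hG, one_mul]
        exact hγanti n (n+1) hn1 (by omega)
      have hR2 : γ n / γ (n+1) ≤ 1 + 2/((n:ℝ)+1) := by
        have hx1 : (1:ℝ) ≤ (n:ℝ) := by exact_mod_cast hn1
        have hx0 : (0:ℝ) < (n:ℝ) := by linarith
        have hx10 : (0:ℝ) < (n:ℝ)+1 := by linarith
        have hxa : (0:ℝ) < ((n:ℝ))^α := Real.rpow_pos_of_pos hx0 α
        have hxa1 : (0:ℝ) < ((n:ℝ)+1)^α := Real.rpow_pos_of_pos hx10 α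
        have hGG : γ n / γ (n+1) = ((n:ℝ)+1)^α / ((n:ℝ))^α := by
          rw [hγ n, hγ (n+1)]
          push_cast
          rw [Real.rpow_neg hx0.le, Real.rpow_neg hx10.le]
          field_simp
        rw [hGG]
        have hb : (1:ℝ) ≤ ((n:ℝ)+1)/(n:ℝ) := by
          rw [le_div_iff₀ hx0, one_mul]; linarith
        have h1 : (((n:ℝ)+1)/(n:ℝ))^α ≤ ((n:ℝ)+1)/(n:ℝ) := by
          calc (((n:ℝ)+1)/(n:ℝ))^α ≤ (((n:ℝ)+1)/(n:ℝ))^(1:ℝ) :=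
                Real.rpow_le_rpow_of_exponent_le hb hα₂.le
            _ = ((n:ℝ)+1)/(n:ℝ) := Real.rpow_one _
        have h2 : (((n:ℝ)+1)/(n:ℝ))^α = ((n:ℝ)+1)^α / ((n:ℝ))^α :=
          Real.div_rpow (le_of_lt hx10) hx0.le α
        have h3 : ((n:ℝ)+1)/(n:ℝ) ≤ 1 + 2/((n:ℝ)+1) := by
          rw [div_le_iff₀ hx0]
          have h4 : (1 + 2/((n:ℝ)+1)) * (n:ℝ) = (n:ℝ) + 2*(n:ℝ)/((n:ℝ)+1) := by ring
          rw [h4]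
          have h5 : (1:ℝ) ≤ 2*(n:ℝ)/((n:ℝ)+1) := by
            rw [le_div_iff₀ hx10]; linarith
          linarith
        rw [← h2]
        exact h1.trans h3
      -- contraction
      have hcontr : ((1 - γ (n+1) * lam) * (1 - γ (n+1) * lam')) * (γ n / γ (n+1))
          ≤ 1 - β * γ (n+1) := by
        have h1 : ((1 - γ (n+1) * lam) * (1 - γ (n+1) * lam')) * (γ n / γ (n+1))
            ≤ (1 - γ (n+1) * lmin) * (1 + 2/((n:ℝ)+1)) :=
          mul_le_mul hQle hR2 (le_trans zero_le_one hR1) (by linarith)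
        have hz2 : γ (n+1) * lmin ≤ 1/2 := le_trans hGlmin hGl
        have hN : (0:ℝ) < (n:ℝ)+1 := by positivity
        have hNz : 4 ≤ ((n:ℝ)+1) * (γ (n+1) * lmin) := by
          have hc : (((n+1):ℕ):ℝ) = (n:ℝ)+1 := by push_cast; ring
          rw [hc] at hG4
          calc (4:ℝ) ≤ lmin * (((n:ℝ)+1) * γ (n+1)) := hG4
            _ = ((n:ℝ)+1) * (γ (n+1) * lmin) := by ring
        have h2 : (1 - γ (n+1) * lmin) * (1 + 2/((n:ℝ)+1)) ≤ 1 - β * γ (n+1) := by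
          have h3 := aux_contr_bound (γ (n+1) * lmin) ((n:ℝ)+1) hGlmin0 hN hNz
          have h4 : (γ (n+1) * lmin)/2 = β * γ (n+1) := by rw [hβdef]; ring
          linarith
        exact h1.trans h2
      have hQR0 : 0 ≤ ((1 - γ (n+1) * lam) * (1 - γ (n+1) * lam')) * (γ n / γ (n+1)) :=
        mul_nonneg hQ0 (le_trans zero_le_one hR1)
      -- epsilon term
      have hεeq : ((((1 - γ (n+1) * lam) * (1 - γ (n+1) * lam')) * (γ n / γ (n+1)) - 1)/(lam+lam')
            + γ (n+1))
          = (((1 - γ (n+1) * lam) * (1 - γ (n+1) * lam')) * (γ n / γ (n+1) - 1)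
              + (γ (n+1))^2 * (lam*lam'))/(lam+lam') := by
        field_simp
        ring
      have hnum0 : 0 ≤ ((1 - γ (n+1) * lam) * (1 - γ (n+1) * lam')) * (γ n / γ (n+1) - 1)
            + (γ (n+1))^2 * (lam*lam') := by
        have hA := mul_nonneg hQ0 (by linarith : 0 ≤ γ n / γ (n+1) - 1)
        have hB : 0 ≤ (γ (n+1))^2 * (lam*lam') :=
          mul_nonneg (sq_nonneg _) (mul_nonneg hlam0.le hlam0'.le)
        linarith
      have hnumle : ((1 - γ (n+1) * lam) * (1 - γ (n+1) * lam')) * (γ n / γ (n+1) - 1)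
            + (γ (n+1))^2 * (lam*lam') ≤ 2/((n:ℝ)+1) + (γ (n+1))^2 * C^2 := by
        have hQ1 : (1 - γ (n+1) * lam) * (1 - γ (n+1) * lam') ≤ 1 := by
          linarith [hQle, hGlmin0]
        have h1 : ((1 - γ (n+1) * lam) * (1 - γ (n+1) * lam')) * (γ n / γ (n+1) - 1)
            ≤ 1 * (2/((n:ℝ)+1)) :=
          mul_le_mul hQ1 (by linarith) (by linarith) one_pos.le
        have h2 : lam * lam' ≤ C^2 := by
          calc lam * lam' ≤ C * lam' := mul_le_mul_of_nonneg_right hl2 hlam0'.le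
            _ ≤ C * C := mul_le_mul_of_nonneg_left hl2' hC.le
            _ = C^2 := (sq C).symm
        have h3 : (γ (n+1))^2 * (lam*lam') ≤ (γ (n+1))^2 * C^2 :=
          mul_le_mul_of_nonneg_left h2 (sq_nonneg _)
        linarith
      have hεle : ((((1 - γ (n+1) * lam) * (1 - γ (n+1) * lam')) * (γ n / γ (n+1)) - 1)/(lam+lam')
            + γ (n+1)) ≤ γ (n+1) * δ (n+1) := by
        rw [hεeq]
        have h1 : (((1 - γ (n+1) * lam) * (1 - γ (n+1) * lam')) * (γ n / γ (n+1) - 1)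
              + (γ (n+1))^2 * (lam*lam'))/(lam+lam')
            ≤ (((1 - γ (n+1) * lam) * (1 - γ (n+1) * lam')) * (γ n / γ (n+1) - 1)
              + (γ (n+1))^2 * (lam*lam'))/(2*lmin) :=
          div_le_div_of_nonneg_left hnum0 (by positivity) (by linarith)
        have h2 : (((1 - γ (n+1) * lam) * (1 - γ (n+1) * lam')) * (γ n / γ (n+1) - 1)
              + (γ (n+1))^2 * (lam*lam'))/(2*lmin)
            ≤ (2/((n:ℝ)+1) + (γ (n+1))^2 * C^2)/(2*lmin) := by
          gcongr
        have h3 : (2/((n:ℝ)+1) + (γ (n+1))^2 * C^2)/(2*lmin) = γ (n+1) * δ (n+1) := by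
          simp only [hδdef]
          have : (((n+1):ℕ):ℝ) = (n:ℝ)+1 := by push_cast; ring
          rw [this]
          field_simp
        linarith
      have hε0 : 0 ≤ ((((1 - γ (n+1) * lam) * (1 - γ (n+1) * lam')) * (γ n / γ (n+1)) - 1)/(lam+lam')
            + γ (n+1)) := by
        rw [hεeq]
        exact div_nonneg hnum0 hμ0.le
      -- the exact identity
      have hid : (1/γ (n+1)) * (∑ k ∈ Finset.Icc 1 (n+1), (γ k)^2 *
            ∏ j ∈ Finset.Icc (k+1) (n+1), ((1 - γ j * lam) * (1 - γ j * lam'))) - 1/(lam+lam')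
          = (((1 - γ (n+1) * lam) * (1 - γ (n+1) * lam')) * (γ n / γ (n+1))) *
              ((1/γ n) * (∑ k ∈ Finset.Icc 1 n, (γ k)^2 *
                ∏ j ∈ Finset.Icc (k+1) n, ((1 - γ j * lam) * (1 - γ j * lam'))) - 1/(lam+lam'))
            + ((((1 - γ (n+1) * lam) * (1 - γ (n+1) * lam')) * (γ n / γ (n+1)) - 1)/(lam+lam')
              + γ (n+1)) := by
        rw [hrec lam lam' n hn1]
        field_simp
        ring
      -- put everything together
      have hβγ1 : β * γ (n+1) ≤ 1/4 := hβγ (n+1) hnn0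
      have hfin : |(1/γ (n+1)) * (∑ k ∈ Finset.Icc 1 (n+1), (γ k)^2 *
            ∏ j ∈ Finset.Icc (k+1) (n+1), ((1 - γ j * lam) * (1 - γ j * lam'))) - 1/(lam+lam')|
          ≤ (1 - β * γ (n+1)) * W m + γ (n+1) * δ (n+1) := by
        rw [hid]
        refine (abs_add_le _ _).trans ?_
        rw [abs_mul, abs_of_nonneg hQR0, abs_of_nonneg hε0]
        have h1 : (((1 - γ (n+1) * lam) * (1 - γ (n+1) * lam')) * (γ n / γ (n+1))) *
              |(1/γ n) * (∑ k ∈ Finset.Icc 1 n, (γ k)^2 *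
                ∏ j ∈ Finset.Icc (k+1) n, ((1 - γ j * lam) * (1 - γ j * lam'))) - 1/(lam+lam')|
            ≤ (1 - β * γ (n+1)) * W m :=
          mul_le_mul hcontr ih (abs_nonneg _) (by linarith)
        linarith
      have hWs' : W (m+1) = (1 - β * γ (n+1)) * W m + γ (n+1) * δ (n+1) := by
        have hidx : n0 + m = n + 1 := by omega
        rw [hWs m, hidx]
        have : β * γ (n+1) * (δ (n+1)/β) = γ (n+1) * δ (n+1) := by
          field_simp [hβ0.ne']
        rw [this]
      rw [hWs']
      exact hfin
  -- assemble the answer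
  refine ⟨fun n => if n + 1 < n0 then crude n else W (n - (n0-1)), ?_, ?_, ?_⟩
  · intro n
    dsimp only
    split
    · exact hcrudepos n
    · exact hWpos _
  · have h := hWtend.comp (tendsto_sub_atTop_nat (n0-1))
    apply h.congr'
    filter_upwards [eventually_ge_atTop n0] with n hn
    simp only [Function.comp]
    rw [if_neg (by omega)]
  · intro n hn lam hlam lam' hlam'
    by_cases hcase : n + 1 < n0
    · simp only [if_pos hcase]
      exact hcrude_bd n hn lam hlam lam' hlam'
    · simp only [if_neg hcase]
      obtain ⟨m, rfl⟩ : ∃ m, n = n0-1+m := ⟨n - (n0-1), by omega⟩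
      have hsub : n0-1+m - (n0-1) = m := by omega
      rw [hsub]
      exact main lam hlam lam' hlam' m
end

section
/- Weighted exponential sum bound: for all constants a ∈ (0,1), b ∈ ℝ and c > 0, there is a positive constant C_{a,b,c} such that for all n ≥ 1, ∑_{k=1}^n k^{-a} k^{b} exp(c k^{1-a}) ≤ C_{a,b,c} · n^{b} exp(c n^{1-a}). -/
open scoped BigOperators
open Real Finset Nat

lemma aux_poly_le_exp (d ε r : ℝ) (hε : 0 < ε) (hr : 0 < r) :
    ∃ C > (0:ℝ), ∀ y : ℝ, 1 ≤ y → y ^ d ≤ C * Real.exp (ε * y ^ r) := by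
  obtain ⟨m, hm⟩ : ∃ m : ℕ, d ≤ r * m := by
    refine ⟨⌈d / r⌉₊, ?_⟩
    have h := (div_le_iff₀ hr).mp (Nat.le_ceil (d / r))
    linarith [h]
  refine ⟨(m ! : ℝ) / ε ^ m, by positivity, fun y hy => ?_⟩
  have hy0 : (0:ℝ) ≤ y := by linarith
  have hz : 0 ≤ ε * y ^ r := by positivity
  have h1 : y ^ d ≤ y ^ (r * m) := Real.rpow_le_rpow_of_exponent_le hy hm
  have h2 : y ^ (r * m) = (y ^ r) ^ m := by
    rw [Real.rpow_mul hy0, Real.rpow_natCast]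
  have h3 : (ε * y ^ r) ^ m / m ! ≤ Real.exp (ε * y ^ r) :=
    Real.pow_div_factorial_le_exp _ hz m
  have h4 : (ε * y ^ r) ^ m = ε ^ m * (y ^ r) ^ m := mul_pow _ _ _
  have hεm : (0:ℝ) < ε ^ m := by positivity
  have hfac : (0:ℝ) < (m ! : ℝ) := by positivity
  rw [h2] at h1
  calc y ^ d ≤ (y ^ r) ^ m := h1
  _ ≤ (m ! : ℝ) / ε ^ m * Real.exp (ε * y ^ r) := by
      rw [div_mul_eq_mul_div, le_div_iff₀ hεm]
      rw [h4, div_le_iff₀ hfac] at h3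
      linarith

lemma aux_geom (x : ℝ) (hx : 0 < x) (N : ℕ) :
    ∑ i ∈ Finset.range N, Real.exp (-x) ^ i ≤ Real.exp x / x := by
  set q := Real.exp (-x) with hqdef
  have hq1 : q < 1 := Real.exp_lt_one_iff.mpr (by linarith)
  have hq0 : 0 < q := Real.exp_pos _
  have hqN : 0 ≤ q ^ N := by positivity
  have hsum : ∑ i ∈ Finset.range N, q ^ i ≤ 1 / (1 - q) := by
    rw [geom_sum_eq (ne_of_lt hq1)]
    have : (q ^ N - 1) / (q - 1) = (1 - q ^ N) / (1 - q) := by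
      rw [← neg_div_neg_eq]; ring_nf
    rw [this]
    gcongr
    · linarith
  have key : x * q ≤ 1 - q := by
    have h := Real.add_one_le_exp x
    have := mul_le_mul_of_nonneg_right h hq0.le
    rw [← Real.exp_add] at this
    simp at this
    nlinarith [Real.exp_pos (-x)]
  have hxq : 0 < x * q := by positivity
  have : 1 / (1 - q) ≤ 1 / (x * q) := by
    apply one_div_le_one_div_of_le hxq key
  refine hsum.trans (this.trans ?_)
  rw [hqdef, Real.exp_neg]
  rw [one_div, mul_inv, inv_inv]
  rw [div_eq_mul_inv, mul_comm]

set_option maxHeartbeats 2000000 in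
/-- **Weighted exponential sum bound** (Lemma G.2): for `a ∈ (0,1)`, `b ∈ ℝ`, `c > 0`,
there is `C > 0` such that for all `n ≥ 1`,
`∑_{k=1}^n k^{-a} k^b exp(c k^{1-a}) ≤ C n^b exp(c n^{1-a})`. -/
theorem weighted_exponential_sum_bound
    (a b c : ℝ) (ha₀ : 0 < a) (ha₁ : a < 1) (hc : 0 < c) :
    ∃ C > (0:ℝ), ∀ n : ℕ, 1 ≤ n →
      ∑ k ∈ Finset.Icc 1 n, (k:ℝ) ^ (-a) * (k:ℝ) ^ b * Real.exp (c * (k:ℝ) ^ (1-a))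
        ≤ C * (n:ℝ) ^ b * Real.exp (c * (n:ℝ) ^ (1-a)) := by
  have hr0 : (0:ℝ) < 1 - a := by linarith
  have h2a : ((2:ℝ)) ^ (-(1-a)) < 1 :=
    Real.rpow_lt_one_of_one_lt_of_neg one_lt_two (by linarith)
  have h2a0 : (0:ℝ) < (2:ℝ) ^ (-(1-a)) := Real.rpow_pos_of_pos two_pos _
  obtain ⟨C₁, hC₁, hpoly⟩ := aux_poly_le_exp (1 + max b 0 - b)
      (c * (1 - (2:ℝ) ^ (-(1-a)))) (1-a) (by nlinarith) hr0
  have hC₂ : (0:ℝ) < (2:ℝ)^a * (2:ℝ)^|b| * Real.exp (c*(1-a)) / (c*(1-a)) := by positivity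
  set C₂ := (2:ℝ)^a * (2:ℝ)^|b| * Real.exp (c*(1-a)) / (c*(1-a)) with hC₂def
  refine ⟨C₁ + C₂, by positivity, fun n hn => ?_⟩
  set f : ℕ → ℝ := fun k => (k:ℝ) ^ (-a) * (k:ℝ) ^ b * Real.exp (c * (k:ℝ) ^ (1-a)) with hf
  have hN0 : (0:ℝ) < (n:ℝ) := by exact_mod_cast hn
  have hN1 : (1:ℝ) ≤ (n:ℝ) := by exact_mod_cast hn
  have hsplit : ∑ k ∈ Finset.Icc 1 n, f k
      = ∑ k ∈ Finset.Ioc 0 (n/2), f k + ∑ k ∈ Finset.Ioc (n/2) n, f k := by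
    rw [Finset.sum_Ioc_consecutive f (Nat.zero_le _) (Nat.div_le_self n 2)]
    apply Finset.sum_congr _ (fun _ _ => rfl)
    ext x
    simp only [Finset.mem_Icc, Finset.mem_Ioc]
    omega
  have hS1 : ∑ k ∈ Finset.Ioc 0 (n/2), f k ≤ C₁ * (n:ℝ) ^ b * Real.exp (c * (n:ℝ) ^ (1-a)) := by
    have hB : (0:ℝ) ≤ max b 0 := le_max_right _ _
    have hterm : ∀ k ∈ Finset.Ioc 0 (n/2),
        f k ≤ (n:ℝ) ^ (max b 0) * Real.exp (c * ((n:ℝ)/2) ^ (1-a)) := by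
      intro k hk
      simp only [Finset.mem_Ioc] at hk
      have hk1 : (1:ℝ) ≤ (k:ℝ) := by exact_mod_cast hk.1
      have hk0 : (0:ℝ) ≤ (k:ℝ) := by linarith
      have hkn : (k:ℝ) ≤ (n:ℝ)/2 := by
        have h1 : (k:ℝ) ≤ ((n/2 : ℕ):ℝ) := by exact_mod_cast hk.2
        have h2 : ((n/2:ℕ):ℝ) ≤ (n:ℝ)/2 := by
          rw [le_div_iff₀ (by norm_num : (0:ℝ) < 2)]
          exact_mod_cast Nat.div_mul_le_self n 2
        linarith
      have e1 : (k:ℝ) ^ (-a) ≤ 1 := Real.rpow_le_one_of_one_le_of_nonpos hk1 (by linarith)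
      have e2 : (k:ℝ) ^ b ≤ (n:ℝ) ^ (max b 0) := by
        calc (k:ℝ) ^ b ≤ (k:ℝ) ^ (max b 0) :=
              Real.rpow_le_rpow_of_exponent_le hk1 (le_max_left _ _)
        _ ≤ (n:ℝ) ^ (max b 0) := Real.rpow_le_rpow hk0 (by linarith) hB
      have e3 : Real.exp (c * (k:ℝ)^(1-a)) ≤ Real.exp (c * ((n:ℝ)/2)^(1-a)) := by
        apply Real.exp_le_exp.mpr
        exact mul_le_mul_of_nonneg_left (Real.rpow_le_rpow hk0 hkn hr0.le) hc.le
      have hp1 : (0:ℝ) ≤ (k:ℝ)^b := Real.rpow_nonneg hk0 _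
      calc f k = (k:ℝ)^(-a) * (k:ℝ)^b * Real.exp (c*(k:ℝ)^(1-a)) := rfl
      _ ≤ 1 * ((n:ℝ)^(max b 0)) * Real.exp (c * ((n:ℝ)/2)^(1-a)) := by
          apply mul_le_mul (mul_le_mul e1 e2 hp1 zero_le_one) e3 (Real.exp_pos _).le
          positivity
      _ = (n:ℝ)^(max b 0) * Real.exp (c * ((n:ℝ)/2)^(1-a)) := by ring
    have hcard := Finset.sum_le_card_nsmul _ _ _ hterm
    rw [Nat.card_Ioc, nsmul_eq_mul] at hcard
    have hcardle : ((n/2 - 0 : ℕ):ℝ) ≤ (n:ℝ) := by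
      have : n/2 - 0 ≤ n := by omega
      exact_mod_cast this
    have hS1' : ∑ k ∈ Finset.Ioc 0 (n/2), f k
        ≤ (n:ℝ) * ((n:ℝ)^(max b 0) * Real.exp (c * ((n:ℝ)/2)^(1-a))) := by
      refine hcard.trans (mul_le_mul_of_nonneg_right hcardle ?_)
      positivity
    refine hS1'.trans ?_
    -- key polynomial-vs-exponential step
    have hhalfpow : ((n:ℝ)/2) ^ (1-a) = (n:ℝ)^(1-a) * (2:ℝ)^(-(1-a)) := by
      rw [div_eq_mul_inv, Real.mul_rpow hN0.le (by norm_num)]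
      congr 1
      rw [Real.inv_rpow (by norm_num : (0:ℝ) ≤ 2), ← Real.rpow_neg (by norm_num : (0:ℝ) ≤ 2)]
    have hNsplit : (n:ℝ)^(1+max b 0-b) * (n:ℝ)^b = (n:ℝ) * (n:ℝ)^(max b 0) := by
      rw [← Real.rpow_add hN0, show 1+max b 0-b+b = 1+max b 0 by ring,
        Real.rpow_add hN0, Real.rpow_one]
    have hy := hpoly (n:ℝ) hN1
    have hexp : Real.exp (c*(1-(2:ℝ)^(-(1-a))) * (n:ℝ)^(1-a)) * Real.exp (c*((n:ℝ)/2)^(1-a))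
        = Real.exp (c*(n:ℝ)^(1-a)) := by
      rw [← Real.exp_add, hhalfpow]
      congr 1
      ring
    calc (n:ℝ) * ((n:ℝ)^(max b 0) * Real.exp (c*((n:ℝ)/2)^(1-a)))
        = ((n:ℝ)^(1+max b 0-b) * (n:ℝ)^b) * Real.exp (c*((n:ℝ)/2)^(1-a)) := by
          rw [hNsplit]; ring
      _ ≤ (C₁ * Real.exp (c*(1-(2:ℝ)^(-(1-a))) * (n:ℝ)^(1-a)) * (n:ℝ)^b)
            * Real.exp (c*((n:ℝ)/2)^(1-a)) := by
          apply mul_le_mul_of_nonneg_right _ (Real.exp_pos _).le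
          exact mul_le_mul_of_nonneg_right hy (Real.rpow_nonneg hN0.le _)
      _ = C₁ * (n:ℝ)^b * (Real.exp (c*(1-(2:ℝ)^(-(1-a))) * (n:ℝ)^(1-a))
            * Real.exp (c*((n:ℝ)/2)^(1-a))) := by ring
      _ = C₁ * (n:ℝ)^b * Real.exp (c*(n:ℝ)^(1-a)) := by rw [hexp]
  have hS2 : ∑ k ∈ Finset.Ioc (n/2) n, f k ≤ C₂ * (n:ℝ) ^ b * Real.exp (c * (n:ℝ) ^ (1-a)) := by
    set x := c*(1-a)*(n:ℝ)^(-a) with hxdef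
    have hx0 : 0 < x := by
      have : (0:ℝ) < (n:ℝ)^(-a) := Real.rpow_pos_of_pos hN0 _
      rw [hxdef]; positivity
    set A : ℝ := (2:ℝ)^a * (n:ℝ)^(-a) * ((2:ℝ)^|b| * (n:ℝ)^b) * Real.exp (c*(n:ℝ)^(1-a))
      with hAdef
    have hA0 : 0 ≤ A := by
      have h1 : (0:ℝ) < (n:ℝ)^(-a) := Real.rpow_pos_of_pos hN0 _
      have h2 : (0:ℝ) < (n:ℝ)^b := Real.rpow_pos_of_pos hN0 _
      rw [hAdef]; positivity
    have hterm : ∀ k ∈ Finset.Ioc (n/2) n,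
        f k ≤ A * Real.exp (-x) ^ (n-k) := by
      intro k hk
      simp only [Finset.mem_Ioc] at hk
      have hk1n : 1 ≤ k := by omega
      have hk1 : (1:ℝ) ≤ (k:ℝ) := by exact_mod_cast hk1n
      have hk0 : (0:ℝ) < (k:ℝ) := by linarith
      have hkn : (k:ℝ) ≤ (n:ℝ) := by exact_mod_cast hk.2
      have hhalf : (n:ℝ)/2 ≤ (k:ℝ) := by
        have h2k : n ≤ 2*k := by omega
        have h2k' : (n:ℝ) ≤ 2*(k:ℝ) := by exact_mod_cast h2k
        linarith
      have hhalf0 : (0:ℝ) < (n:ℝ)/2 := by linarith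
      have hhalfpow : ∀ p : ℝ, ((n:ℝ)/2) ^ p = (n:ℝ)^p * ((2:ℝ)^p)⁻¹ := by
        intro p
        rw [div_eq_mul_inv, Real.mul_rpow hN0.le (by norm_num),
          Real.inv_rpow (by norm_num : (0:ℝ) ≤ 2)]
      have e1 : (k:ℝ)^(-a) ≤ (2:ℝ)^a * (n:ℝ)^(-a) := by
        have h2 : (k:ℝ)^(-a) ≤ ((n:ℝ)/2)^(-a) :=
          Real.rpow_le_rpow_of_nonpos hhalf0 hhalf (by linarith)
        have h3 : ((n:ℝ)/2)^(-a) = (2:ℝ)^a * (n:ℝ)^(-a) := by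
          rw [hhalfpow, ← Real.rpow_neg (by norm_num : (0:ℝ) ≤ 2), neg_neg, mul_comm]
        linarith [h3 ▸ h2]
      have e2 : (k:ℝ)^b ≤ (2:ℝ)^|b| * (n:ℝ)^b := by
        rcases le_or_gt 0 b with hb | hb
        · rw [abs_of_nonneg hb]
          have h1 : (k:ℝ)^b ≤ (n:ℝ)^b := Real.rpow_le_rpow hk0.le hkn hb
          have h2 : (1:ℝ) ≤ (2:ℝ)^b := Real.one_le_rpow one_le_two hb
          nlinarith [Real.rpow_nonneg hN0.le b]
        · rw [abs_of_neg hb]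
          have h1 : (k:ℝ)^b ≤ ((n:ℝ)/2)^b :=
            Real.rpow_le_rpow_of_nonpos hhalf0 hhalf hb.le
          have h3 : ((n:ℝ)/2)^b = (2:ℝ)^(-b) * (n:ℝ)^b := by
            rw [hhalfpow, ← Real.rpow_neg (by norm_num : (0:ℝ) ≤ 2), mul_comm]
          linarith [h3 ▸ h1]
      have hsplitpow : (n:ℝ)^(1-a) = (n:ℝ)^(-a)*(n:ℝ) := by
        rw [show (1-a) = -a+1 by ring, Real.rpow_add_one hN0.ne']
      have hber : (k:ℝ)^(1-a) + (1-a)*(n:ℝ)^(-a)*((n:ℝ)-(k:ℝ)) ≤ (n:ℝ)^(1-a) := by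
        have hs : (-1:ℝ) ≤ (k:ℝ)/(n:ℝ) - 1 := by
          have : (0:ℝ) ≤ (k:ℝ)/(n:ℝ) := by positivity
          linarith
        have h := rpow_one_add_le_one_add_mul_self hs hr0.le (by linarith : (1-a) ≤ 1)
        rw [show (1:ℝ) + ((k:ℝ)/(n:ℝ) - 1) = (k:ℝ)/(n:ℝ) by ring] at h
        have h2 := mul_le_mul_of_nonneg_right h (Real.rpow_nonneg hN0.le (1-a))
        have hdiv : ((k:ℝ)/(n:ℝ))^(1-a) * (n:ℝ)^(1-a) = (k:ℝ)^(1-a) := by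
          rw [Real.div_rpow hk0.le hN0.le]
          field_simp
        rw [hdiv] at h2
        have hx1 : (1-a)*((k:ℝ)/(n:ℝ)-1)*(n:ℝ)^(1-a)
            = (1-a)*((k:ℝ)-(n:ℝ))*(n:ℝ)^(-a) := by
          rw [hsplitpow]
          field_simp
        have expand : (1+(1-a)*((k:ℝ)/(n:ℝ)-1)) * (n:ℝ)^(1-a)
            = (n:ℝ)^(1-a) + (1-a)*((k:ℝ)/(n:ℝ)-1)*(n:ℝ)^(1-a) := by ring
        rw [expand, hx1] at h2
        linarith
      have hcast : ((n-k:ℕ):ℝ) = (n:ℝ) - (k:ℝ) := by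
        have h6 : ((n - k : ℕ) : ℝ) = (n:ℝ) - (k:ℝ) := by
          push_cast [hk.2]
          ring
        exact h6
      have e3 : Real.exp (c*(k:ℝ)^(1-a)) ≤ Real.exp (c*(n:ℝ)^(1-a)) * Real.exp (-x) ^ (n-k) := by
        rw [← Real.exp_nat_mul, ← Real.exp_add]
        apply Real.exp_le_exp.mpr
        rw [hcast, hxdef]
        have h5 := mul_le_mul_of_nonneg_left hber hc.le
        nlinarith [h5]
      have hp1 : (0:ℝ) ≤ (k:ℝ)^b := Real.rpow_nonneg hk0.le _
      have hq1 : (0:ℝ) ≤ (2:ℝ)^a * (n:ℝ)^(-a) := by positivity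
      calc f k = (k:ℝ)^(-a) * (k:ℝ)^b * Real.exp (c*(k:ℝ)^(1-a)) := rfl
      _ ≤ ((2:ℝ)^a * (n:ℝ)^(-a)) * ((2:ℝ)^|b| * (n:ℝ)^b)
            * (Real.exp (c*(n:ℝ)^(1-a)) * Real.exp (-x) ^ (n-k)) := by
          apply mul_le_mul (mul_le_mul e1 e2 hp1 hq1) e3 (Real.exp_pos _).le
          have h2 : (0:ℝ) < (n:ℝ)^b := Real.rpow_pos_of_pos hN0 _
          positivity
      _ = A * Real.exp (-x) ^ (n-k) := by rw [hAdef]; ring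
    have hsum1 : ∑ k ∈ Finset.Ioc (n/2) n, f k
        ≤ A * ∑ k ∈ Finset.Ioc (n/2) n, Real.exp (-x) ^ (n-k) := by
      rw [Finset.mul_sum]
      exact Finset.sum_le_sum hterm
    have hgeom : ∑ k ∈ Finset.Ioc (n/2) n, Real.exp (-x) ^ (n-k) ≤ Real.exp x / x := by
      have him : ∑ k ∈ Finset.Ioc (n/2) n, Real.exp (-x) ^ (n-k)
          = ∑ j ∈ (Finset.Ioc (n/2) n).image (fun k => n - k), Real.exp (-x) ^ j := by
        rw [Finset.sum_image]
        intro k1 h1 k2 h2 h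
        simp only [Finset.mem_coe, Finset.mem_Ioc] at h1 h2 h
        omega
      rw [him]
      have hsub : ∑ j ∈ (Finset.Ioc (n/2) n).image (fun k => n - k), Real.exp (-x) ^ j
          ≤ ∑ j ∈ Finset.range (n+1), Real.exp (-x) ^ j := by
        apply Finset.sum_le_sum_of_subset_of_nonneg
        · intro j hj
          simp only [Finset.mem_image, Finset.mem_Ioc] at hj
          obtain ⟨k, hk, rfl⟩ := hj
          simp only [Finset.mem_range]
          omega
        · intro j _ _
          positivity
      exact hsub.trans (aux_geom x hx0 (n+1))
    have hxle : x ≤ c*(1-a) := by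
      have h1 : (n:ℝ)^(-a) ≤ 1 := Real.rpow_le_one_of_one_le_of_nonpos hN1 (by linarith)
      rw [hxdef]
      have h7 := mul_le_mul_of_nonneg_left h1 (by positivity : (0:ℝ) ≤ c*(1-a))
      linarith
    have hNa : (0:ℝ) < (n:ℝ)^a := Real.rpow_pos_of_pos hN0 _
    have hxinv : 1/x = (n:ℝ)^a / (c*(1-a)) := by
      rw [hxdef, Real.rpow_neg hN0.le]
      field_simp
    have hgeo2 : Real.exp x / x ≤ Real.exp (c*(1-a)) / (c*(1-a)) * (n:ℝ)^a := by
      rw [div_eq_mul_one_div, hxinv]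
      calc Real.exp x * ((n:ℝ)^a/(c*(1-a)))
          ≤ Real.exp (c*(1-a)) * ((n:ℝ)^a/(c*(1-a))) :=
            mul_le_mul_of_nonneg_right (Real.exp_le_exp.mpr hxle) (by positivity)
      _ = Real.exp (c*(1-a)) / (c*(1-a)) * (n:ℝ)^a := by ring
    have hfinal : A * (Real.exp (c*(1-a)) / (c*(1-a)) * (n:ℝ)^a)
        = C₂ * (n:ℝ)^b * Real.exp (c*(n:ℝ)^(1-a)) := by
      have hone : (n:ℝ)^(-a) * (n:ℝ)^a = 1 := by
        rw [← Real.rpow_add hN0]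
        simp
      rw [hAdef, hC₂def]
      calc (2:ℝ)^a * (n:ℝ)^(-a) * ((2:ℝ)^|b| * (n:ℝ)^b) * Real.exp (c*(n:ℝ)^(1-a))
            * (Real.exp (c*(1-a)) / (c*(1-a)) * (n:ℝ)^a)
          = ((n:ℝ)^(-a) * (n:ℝ)^a) * ((2:ℝ)^a * (2:ℝ)^|b| * Real.exp (c*(1-a)) / (c*(1-a)))
            * ((n:ℝ)^b * Real.exp (c*(n:ℝ)^(1-a))) := by ring
      _ = (2:ℝ)^a * (2:ℝ)^|b| * Real.exp (c*(1-a)) / (c*(1-a))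
            * (n:ℝ)^b * Real.exp (c*(n:ℝ)^(1-a)) := by rw [hone]; ring
    calc ∑ k ∈ Finset.Ioc (n/2) n, f k
        ≤ A * ∑ k ∈ Finset.Ioc (n/2) n, Real.exp (-x) ^ (n-k) := hsum1
      _ ≤ A * (Real.exp x / x) := mul_le_mul_of_nonneg_left hgeom hA0
      _ ≤ A * (Real.exp (c*(1-a)) / (c*(1-a)) * (n:ℝ)^a) := mul_le_mul_of_nonneg_left hgeo2 hA0
      _ = C₂ * (n:ℝ)^b * Real.exp (c*(n:ℝ)^(1-a)) := hfinal
  rw [hsplit]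
  calc ∑ k ∈ Finset.Ioc 0 (n/2), f k + ∑ k ∈ Finset.Ioc (n/2) n, f k
      ≤ C₁ * (n:ℝ) ^ b * Real.exp (c * (n:ℝ) ^ (1-a))
        + C₂ * (n:ℝ) ^ b * Real.exp (c * (n:ℝ) ^ (1-a)) := add_le_add hS1 hS2
    _ = (C₁ + C₂) * (n:ℝ) ^ b * Real.exp (c * (n:ℝ) ^ (1-a)) := by ring
end

section
/- Two-sided bound for the normalizing sequence: let s ∈ (0,1) and b_n := ∑_{k=1}^n exp(k^{1-s}/(1-s)). Then there are positive constants c and C such that for all n ≥ 1, c · n^{s} exp(n^{1-s}/(1-s)) ≤ b_n ≤ C · n^{s} exp(n^{1-s}/(1-s)). -/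
open scoped BigOperators

noncomputable def auxE (s x : ℝ) : ℝ := Real.exp (x ^ (1-s) / (1-s))
noncomputable def auxF (s x : ℝ) : ℝ := x ^ s * auxE s x

lemma auxF_hasDerivAt (s : ℝ) (hs₀ : 0 < s) (hs₁ : s < 1) {x : ℝ} (hx : 0 < x) :
    HasDerivAt (auxF s) ((s * x ^ (s-1) + 1) * auxE s x) x := by
  have h1s : (0:ℝ) < 1 - s := by linarith
  have h1 : HasDerivAt (fun x : ℝ => x ^ s) (s * x ^ (s-1)) x := by
    simpa [mul_comm] using Real.hasDerivAt_rpow_const (p := s) (Or.inl hx.ne')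
  have h2 : HasDerivAt (fun x : ℝ => x ^ (1-s) / (1-s)) (x ^ (-s)) x := by
    have h := (Real.hasDerivAt_rpow_const (p := 1-s) (Or.inl hx.ne')).div_const (1-s)
    refine h.congr_deriv ?_
    rw [mul_comm, mul_div_assoc, div_self h1s.ne', mul_one]
    norm_num
  have h3 : HasDerivAt (auxE s) (auxE s x * x ^ (-s)) x := h2.exp
  have h4 := h1.mul h3
  refine h4.congr_deriv ?_
  symm
  have hxs : x ^ s * x ^ (-s) = 1 := by
    rw [← Real.rpow_add hx]; simp
  ring_nf
  rw [mul_assoc (auxE s x), hxs, mul_one]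

lemma auxE_mono (s : ℝ) (hs₁ : s < 1) {x y : ℝ} (hx : 0 ≤ x) (hxy : x ≤ y) :
    auxE s x ≤ auxE s y := by
  have h1s : (0:ℝ) < 1 - s := by linarith
  unfold auxE
  have : x ^ (1-s) ≤ y ^ (1-s) := Real.rpow_le_rpow hx hxy h1s.le
  exact Real.exp_le_exp.2 (by gcongr)

lemma auxE_pos (s x : ℝ) : 0 < auxE s x := Real.exp_pos _

lemma auxF_step (s : ℝ) (hs₀ : 0 < s) (hs₁ : s < 1) {a : ℝ} (ha : 1 ≤ a) :
    auxE s a ≤ auxF s (a+1) - auxF s a ∧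
      auxF s (a+1) - auxF s a ≤ (1+s) * auxE s (a+1) := by
  have hab : a < a + 1 := by linarith
  have hcont : ContinuousOn (auxF s) (Set.Icc a (a+1)) := by
    intro x hx
    have hx0 : (0:ℝ) < x := by have := hx.1; linarith
    exact ((auxF_hasDerivAt s hs₀ hs₁ hx0).continuousAt).continuousWithinAt
  have hdiff : ∀ x ∈ Set.Ioo a (a+1),
      HasDerivAt (auxF s) ((s * x ^ (s-1) + 1) * auxE s x) x := fun x hx =>
    auxF_hasDerivAt s hs₀ hs₁ (by have := hx.1; linarith)
  obtain ⟨ξ, hξ, hder⟩ := exists_hasDerivAt_eq_slope (auxF s)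
    (fun x => (s * x ^ (s-1) + 1) * auxE s x) hab hcont hdiff
  have hξ1 : 1 ≤ ξ := le_of_lt (lt_of_le_of_lt ha hξ.1)
  have hslope : auxF s (a+1) - auxF s a = (s * ξ ^ (s-1) + 1) * auxE s ξ := by
    rw [hder]; simp
  have hE1 : auxE s a ≤ auxE s ξ := auxE_mono s hs₁ (by linarith) hξ.1.le
  have hE2 : auxE s ξ ≤ auxE s (a+1) := auxE_mono s hs₁ (by linarith) hξ.2.le
  have hpow : ξ ^ (s-1) ≤ 1 :=
    Real.rpow_le_one_of_one_le_of_nonpos hξ1 (by linarith)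
  have hpow0 : 0 ≤ ξ ^ (s-1) := Real.rpow_nonneg (by linarith) _
  constructor
  · rw [hslope]
    calc auxE s a ≤ auxE s ξ := hE1
      _ = 1 * auxE s ξ := (one_mul _).symm
      _ ≤ (s * ξ ^ (s-1) + 1) * auxE s ξ :=
        mul_le_mul_of_nonneg_right (by nlinarith) (auxE_pos s ξ).le
  · rw [hslope]
    calc (s * ξ ^ (s-1) + 1) * auxE s ξ ≤ (1+s) * auxE s ξ :=
        mul_le_mul_of_nonneg_right (by nlinarith) (auxE_pos s ξ).le
      _ ≤ (1+s) * auxE s (a+1) := mul_le_mul_of_nonneg_left hE2 (by linarith)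

lemma auxF_grow (s : ℝ) (hs₀ : 0 < s) (hs₁ : s < 1) {x : ℝ} (hx : 1 ≤ x) :
    auxF s (x+1) ≤ 2 * Real.exp (1/(1-s)) * auxF s x := by
  have h1s : (0:ℝ) < 1 - s := by linarith
  have hx0 : (0:ℝ) ≤ x := le_trans zero_le_one hx
  have hsub : (x+1) ^ (1-s) ≤ x ^ (1-s) + 1 := by
    have h := NNReal.rpow_add_le_add_rpow (Real.toNNReal x) 1
      (by linarith : (0:ℝ) ≤ 1 - s) (by linarith : 1 - s ≤ 1)
    have h' := NNReal.coe_le_coe.2 h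
    push_cast [NNReal.coe_rpow, Real.coe_toNNReal x hx0] at h'
    simpa using h'
  have hE : auxE s (x+1) ≤ Real.exp (1/(1-s)) * auxE s x := by
    unfold auxE
    rw [← Real.exp_add]
    apply Real.exp_le_exp.2
    rw [← add_div]
    gcongr
    linarith
  have hP : (x+1) ^ s ≤ 2 * x ^ s := by
    calc (x+1) ^ s ≤ (2*x) ^ s := Real.rpow_le_rpow (by linarith) (by linarith) hs₀.le
      _ = 2 ^ s * x ^ s := Real.mul_rpow (by norm_num) hx0
      _ ≤ 2 * x ^ s := by
        have h2 : (2:ℝ) ^ s ≤ 2 ^ (1:ℝ) :=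
          Real.rpow_le_rpow_of_exponent_le one_le_two hs₁.le
        rw [Real.rpow_one] at h2
        exact mul_le_mul_of_nonneg_right h2 (Real.rpow_nonneg hx0 s)
  calc auxF s (x+1) = (x+1) ^ s * auxE s (x+1) := rfl
    _ ≤ (2 * x ^ s) * (Real.exp (1/(1-s)) * auxE s x) :=
      mul_le_mul hP hE (auxE_pos s _).le (by positivity)
    _ = 2 * Real.exp (1/(1-s)) * auxF s x := by unfold auxF; ring


/-- **Two-sided bound for the normalizing sequence** (Corollary G.1): for `s ∈ (0,1)`
and `b_n = ∑_{k=1}^n exp(k^{1-s}/(1-s))`, there are `c, C > 0` such that for all `n ≥ 1`,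
`c n^s exp(n^{1-s}/(1-s)) ≤ b_n ≤ C n^s exp(n^{1-s}/(1-s))`. -/
theorem normalizing_sequence_two_sided_bound
    (s : ℝ) (hs₀ : 0 < s) (hs₁ : s < 1)
    (b : ℕ → ℝ) (hb : ∀ n, b n = ∑ k ∈ Finset.Icc 1 n, Real.exp ((k:ℝ) ^ (1-s) / (1-s))) :
    ∃ c > (0:ℝ), ∃ C > (0:ℝ), ∀ n : ℕ, 1 ≤ n →
      c * (n:ℝ) ^ s * Real.exp ((n:ℝ) ^ (1-s) / (1-s)) ≤ b n ∧
      b n ≤ C * (n:ℝ) ^ s * Real.exp ((n:ℝ) ^ (1-s) / (1-s)) := by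
  have h1s : (0:ℝ) < 1 - s := by linarith
  have hbrec : ∀ n : ℕ, b (n+1) = b n + auxE s ((n:ℝ)+1) := by
    intro n
    rw [hb, hb, Finset.sum_Icc_succ_top (Nat.succ_le_succ (Nat.zero_le n))]
    push_cast
    rfl
  -- upper telescoping
  have hup : ∀ n : ℕ, b n ≤ auxF s ((n:ℝ)+1) - auxF s 1 := by
    intro n
    induction n with
    | zero => simp [hb]
    | succ n ih =>
      have hstep := (auxF_step s hs₀ hs₁ (a := (n:ℝ)+1)
        (by push_cast; linarith [Nat.cast_nonneg (α := ℝ) n])).1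
      rw [hbrec n]
      push_cast
      linarith
  -- lower telescoping
  have hlow : ∀ n : ℕ, 1 ≤ n → auxF s (n:ℝ) - auxF s 1 ≤ (1+s) * (b n - auxE s 1) := by
    intro n hn
    induction n, hn using Nat.le_induction with
    | base => simp [hb, auxE, auxF]
    | succ n hn ih =>
      have hn1 : (1:ℝ) ≤ (n:ℝ) := by exact_mod_cast hn
      have hstep := (auxF_step s hs₀ hs₁ (a := (n:ℝ)) hn1).2
      rw [hbrec n]
      push_cast
      linarith
  refine ⟨1/(1+s), by positivity, 2 * Real.exp (1/(1-s)), by positivity, fun n hn => ?_⟩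
  have hn1 : (1:ℝ) ≤ (n:ℝ) := by exact_mod_cast hn
  have hF1 : auxF s 1 = auxE s 1 := by unfold auxF; rw [Real.one_rpow, one_mul]
  have hfn : auxF s (n:ℝ) = (n:ℝ) ^ s * Real.exp ((n:ℝ) ^ (1-s) / (1-s)) := rfl
  constructor
  · have h := hlow n hn
    have hE1 : 0 < auxE s 1 := auxE_pos s 1
    have hmain : auxF s (n:ℝ) ≤ (1+s) * b n := by
      rw [hF1] at h
      nlinarith
    calc 1/(1+s) * (n:ℝ) ^ s * Real.exp ((n:ℝ) ^ (1-s) / (1-s))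
        = auxF s (n:ℝ) / (1+s) := by rw [hfn]; ring
      _ ≤ b n := by rw [div_le_iff₀ (by linarith)]; linarith
  · have h := hup n
    have hgrow := auxF_grow s hs₀ hs₁ hn1
    have hF1pos : 0 < auxF s 1 := by rw [hF1]; exact auxE_pos s 1
    calc b n ≤ auxF s ((n:ℝ)+1) - auxF s 1 := h
      _ ≤ auxF s ((n:ℝ)+1) := by linarith
      _ ≤ 2 * Real.exp (1/(1-s)) * auxF s (n:ℝ) := hgrow
      _ = 2 * Real.exp (1/(1-s)) * (n:ℝ) ^ s * Real.exp ((n:ℝ) ^ (1-s) / (1-s)) := by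
        rw [hfn]; ring
end

section
/- Explicit asymptotic covariances for the geometric median of the uniform law on the sphere: let d ≥ 3 and let X be uniformly distributed on the unit sphere S^{d-1} ⊂ ℝ^d. Then the geometric median of X is m = 0; the Hessian at m of the median objective G₀(h) := E[‖X−h‖ − ‖X‖] is Γ_m := E[(1/‖X‖)(I_d − (X⊗X)/‖X‖²)] = ((d−1)/d)·I_d; the covariance Σ' := E[(X/‖X‖)⊗(X/‖X‖)] equals (1/d)·I_d; consequently Σ_RM := ∫_0^∞ e^{-sΓ_m} Σ' e^{-sΓ_m} ds = (1/(2(d−1)))·I_d and Σ := Γ_m^{-1} Σ' Γ_m^{-1} = (d/(d−1)²)·I_d. -/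
open MeasureTheory ProbabilityTheory Filter Asymptotics
open scoped InnerProductSpace RealInnerProductSpace NNReal Topology BigOperators

noncomputable section

/-- The rank-one operator `u ⊗ v : w ↦ ⟪u, w⟫ v`. -/
def outer {H : Type*} [NormedAddCommGroup H] [InnerProductSpace ℝ H] (u v : H) :
    H →L[ℝ] H := (innerSL ℝ u).smulRight v

/-- The Frobenius (Hilbert–Schmidt) norm of an operator, w.r.t. a Hilbert basis. -/
def frobNorm {H : Type*} [NormedAddCommGroup H] [InnerProductSpace ℝ H]
    {ι : Type*} (e : HilbertBasis ι ℝ H) (A : H →L[ℝ] H) : ℝ :=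
  Real.sqrt (∑' i, ‖A (e i)‖ ^ 2)

namespace GMAux

variable {d : ℕ}

lemma rot_integral {F : Type*} [NormedAddCommGroup F] [NormedSpace ℝ F]
    (ν : Measure (EuclideanSpace ℝ (Fin d)))
    (O : EuclideanSpace ℝ (Fin d) ≃ₗᵢ[ℝ] EuclideanSpace ℝ (Fin d)) (hO : ν.map O = ν)
    (f : EuclideanSpace ℝ (Fin d) → F) :
    ∫ x, f (O x) ∂ν = ∫ x, f x ∂ν := by
  conv_rhs => rw [← hO]
  rw [show (ν.map O) = ν.map (O.toHomeomorph.toMeasurableEquiv) from rfl,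
    MeasureTheory.integral_map_equiv]
  rfl

lemma rot_set (ν : Measure (EuclideanSpace ℝ (Fin d)))
    (O : EuclideanSpace ℝ (Fin d) ≃ₗᵢ[ℝ] EuclideanSpace ℝ (Fin d)) (hO : ν.map O = ν)
    {A : Set (EuclideanSpace ℝ (Fin d))} (hA : MeasurableSet A) : ν (O ⁻¹' A) = ν A := by
  conv_rhs => rw [← hO]
  rw [Measure.map_apply O.continuous.measurable hA]

lemma integrable_of_bdd {F : Type*} [NormedAddCommGroup F]
    (ν : Measure (EuclideanSpace ℝ (Fin d))) [IsFiniteMeasure ν]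
    {f : EuclideanSpace ℝ (Fin d) → F} (hf : Continuous f) {C : ℝ}
    (h : ∀ᵐ x ∂ν, ‖f x‖ ≤ C) : Integrable f ν :=
  ⟨hf.aestronglyMeasurable, HasFiniteIntegral.of_bounded h⟩

def flip (i : Fin d) : EuclideanSpace ℝ (Fin d) ≃ₗᵢ[ℝ] EuclideanSpace ℝ (Fin d) :=
  LinearIsometryEquiv.piLpCongrRight 2
    (fun k => if k = i then LinearIsometryEquiv.neg ℝ else LinearIsometryEquiv.refl ℝ ℝ)

lemma flip_apply (i : Fin d) (x : EuclideanSpace ℝ (Fin d)) (k : Fin d) :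
    flip i x k = if k = i then -x k else x k := by
  simp [flip, LinearIsometryEquiv.piLpCongrRight_apply]
  split <;> simp

def swap (i j : Fin d) : EuclideanSpace ℝ (Fin d) ≃ₗᵢ[ℝ] EuclideanSpace ℝ (Fin d) :=
  LinearIsometryEquiv.piLpCongrLeft 2 ℝ ℝ (Equiv.swap i j)

lemma swap_apply (i j : Fin d) (x : EuclideanSpace ℝ (Fin d)) (k : Fin d) :
    swap i j x k = x (Equiv.swap i j k) := by
  simp [swap, LinearIsometryEquiv.piLpCongrLeft_apply, Equiv.piCongrLeft'_apply]

lemma abs_coord_le (x : EuclideanSpace ℝ (Fin d)) (i : Fin d) : |x i| ≤ ‖x‖ := by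
  have h1 : |(⟪EuclideanSpace.single i (1:ℝ), x⟫)| = |x i| := by
    simp [EuclideanSpace.inner_single_left]
  calc |x i| = |(⟪EuclideanSpace.single i (1:ℝ), x⟫)| := h1.symm
    _ ≤ ‖EuclideanSpace.single i (1:ℝ)‖ * ‖x‖ := abs_real_inner_le_norm _ _
    _ = ‖x‖ := by simp [EuclideanSpace.norm_single]

lemma norm_outer_le {H : Type*} [NormedAddCommGroup H] [InnerProductSpace ℝ H] (u v : H) :
    ‖outer u v‖ ≤ ‖u‖ * ‖v‖ := by
  rw [outer, ContinuousLinearMap.norm_smulRight_apply, innerSL_apply_norm]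

lemma cont_outer : Continuous (fun x : EuclideanSpace ℝ (Fin d) => outer x x) :=
  (isBoundedBilinearMap_smulRight (𝕜 := ℝ)).continuous.comp
    (((innerSL ℝ).continuous).prodMk continuous_id)

lemma inner_coord (x v : EuclideanSpace ℝ (Fin d)) : ⟪x, v⟫ = ∑ i, x i * v i := by
  simp [PiLp.inner_apply, RCLike.inner_apply]
  exact Finset.sum_congr rfl (fun _ _ => mul_comm _ _)

lemma ae_norm_one (ν : Measure (EuclideanSpace ℝ (Fin d))) [IsProbabilityMeasure ν]
    (hs : ν (Metric.sphere (0 : EuclideanSpace ℝ (Fin d)) 1) = 1) :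
    ∀ᵐ x ∂ν, ‖x‖ = 1 := by
  have hms : MeasurableSet (Metric.sphere (0 : EuclideanSpace ℝ (Fin d)) 1) :=
    Metric.isClosed_sphere.measurableSet
  have hc : ν (Metric.sphere (0 : EuclideanSpace ℝ (Fin d)) 1)ᶜ = 0 := by
    rw [measure_compl hms (measure_ne_top _ _), hs, measure_univ, tsub_self]
  rw [MeasureTheory.ae_iff]
  refine measure_mono_null (fun x hx => ?_) hc
  simpa [mem_sphere_zero_iff_norm] using hx

lemma integral_outer (hd : 0 < d) (ν : Measure (EuclideanSpace ℝ (Fin d))) [IsProbabilityMeasure ν]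
    (hs : ν (Metric.sphere (0:EuclideanSpace ℝ (Fin d)) 1) = 1)
    (hrot : ∀ O : EuclideanSpace ℝ (Fin d) ≃ₗᵢ[ℝ] EuclideanSpace ℝ (Fin d), ν.map O = ν) :
    ∫ x, outer x x ∂ν = ((d:ℝ))⁻¹ • ContinuousLinearMap.id ℝ (EuclideanSpace ℝ (Fin d)) := by
  have hae := ae_norm_one ν hs
  have hdR : (0:ℝ) < (d:ℝ) := by exact_mod_cast hd
  have hint : ∀ i j : Fin d, Integrable (fun x : EuclideanSpace ℝ (Fin d) => x i * x j) ν := by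
    intro i j
    refine integrable_of_bdd ν ?_ (C := 1) ?_
    · exact ((EuclideanSpace.proj i).continuous).mul ((EuclideanSpace.proj j).continuous)
    · filter_upwards [hae] with x hx
      have h1 := abs_coord_le x i; have h2 := abs_coord_le x j
      rw [Real.norm_eq_abs, abs_mul]
      nlinarith [abs_nonneg (x i), abs_nonneg (x j)]
  have hoff : ∀ i j : Fin d, i ≠ j → ∫ x, x i * x j ∂ν = 0 := by
    intro i j hij
    have h := rot_integral ν (flip i) (hrot _) (fun x => x i * x j)
    have he : ∀ x : EuclideanSpace ℝ (Fin d), (flip i x) i * (flip i x) j = -(x i * x j) := by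
      intro x
      rw [flip_apply, flip_apply, if_pos rfl, if_neg hij.symm]
      ring
    simp only [he, integral_neg] at h
    linarith
  have hdiag : ∀ i : Fin d, ∫ x, x i * x i ∂ν = (d:ℝ)⁻¹ := by
    have heq : ∀ i j : Fin d, ∫ x, x i * x i ∂ν = ∫ x, x j * x j ∂ν := by
      intro i j
      have h := rot_integral ν (swap i j) (hrot _) (fun x => x i * x i)
      have he : ∀ x : EuclideanSpace ℝ (Fin d), (swap i j x) i * (swap i j x) i = x j * x j := by
        intro x; rw [swap_apply, Equiv.swap_apply_left]
      simp only [he] at h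
      exact h.symm
    have hsum : ∑ j : Fin d, ∫ x, x j * x j ∂ν = 1 := by
      rw [← integral_finset_sum _ (fun j _ => hint j j)]
      have hone : ∀ᵐ x ∂ν, (∑ j, x j * x j) = 1 := by
        filter_upwards [hae] with x hx
        have : (∑ j, x j * x j) = ⟪x, x⟫ := (inner_coord x x).symm
        rw [this, real_inner_self_eq_norm_sq, hx, one_pow]
      rw [integral_congr_ae hone, integral_const, probReal_univ]
      simp
    intro i
    have : ∑ j : Fin d, ∫ x, x j * x j ∂ν = (d:ℝ) * ∫ x, x i * x i ∂ν := by
      rw [Finset.sum_congr rfl (fun j _ => heq j i), Finset.sum_const, Finset.card_univ,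
        Fintype.card_fin, nsmul_eq_mul]
    rw [this] at hsum
    field_simp at hsum ⊢
    linarith
  have hio : Integrable (fun x : EuclideanSpace ℝ (Fin d) => outer x x) ν := by
    refine integrable_of_bdd ν cont_outer (C := 1) ?_
    filter_upwards [hae] with x hx
    exact (norm_outer_le x x).trans (by rw [hx]; norm_num)
  ext v j
  have hiv : Integrable (fun x : EuclideanSpace ℝ (Fin d) => (⟪x, v⟫) • x) ν := by
    refine integrable_of_bdd ν ?_ (C := ‖v‖) ?_
    · fun_prop
    · filter_upwards [hae] with x hx
      rw [norm_smul, hx]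
      calc ‖(⟪x,v⟫)‖ * 1 = ‖(⟪x,v⟫)‖ := mul_one _
        _ ≤ ‖x‖ * ‖v‖ := norm_inner_le_norm x v
        _ = ‖v‖ := by rw [hx, one_mul]
  have h1 : (∫ x, outer x x ∂ν) v = ∫ x, (⟪x, v⟫) • x ∂ν :=
    ContinuousLinearMap.integral_apply hio v
  have h2 : ∀ j : Fin d, (∫ x, (⟪x, v⟫) • x ∂ν) j = (d:ℝ)⁻¹ * v j := by
    intro j
    have h3 : (EuclideanSpace.proj j) (∫ x, (⟪x, v⟫) • x ∂ν)
        = ∫ x, (⟪x, v⟫) * x j ∂ν := by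
      rw [← ContinuousLinearMap.integral_comp_comm _ hiv]
      rfl
    have h4 : ∫ x, (⟪x, v⟫) * x j ∂ν = ∑ i, v i * ∫ x, x i * x j ∂ν := by
      calc ∫ x, (⟪x, v⟫) * x j ∂ν = ∫ x, ∑ i, v i * (x i * x j) ∂ν := by
            apply integral_congr_ae
            filter_upwards with x
            rw [inner_coord, Finset.sum_mul]
            exact Finset.sum_congr rfl (fun i _ => by ring)
        _ = ∑ i, ∫ x, v i * (x i * x j) ∂ν :=
            integral_finset_sum _ (fun i _ => (hint i j).const_mul (v i))
        _ = ∑ i, v i * ∫ x, x i * x j ∂ν :=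
            Finset.sum_congr rfl (fun i _ => integral_const_mul _ _)
    have h5 : ∑ i, v i * ∫ x, x i * x j ∂ν = (d:ℝ)⁻¹ * v j := by
      rw [Finset.sum_eq_single j]
      · rw [hdiag j]; ring
      · intro i _ hij; rw [hoff i j hij]; ring
      · intro habs; exact absurd (Finset.mem_univ j) habs
    have : (∫ x, (⟪x, v⟫) • x ∂ν) j = (EuclideanSpace.proj j) (∫ x, (⟪x, v⟫) • x ∂ν) := rfl
    rw [this, h3, h4, h5]
  rw [h1, h2 j]
  simp [PiLp.smul_apply]

lemma same_ray_case {h x : EuclideanSpace ℝ (Fin d)} (hh : h ≠ 0) (hx : ‖x‖ = 1)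
    (hg : ‖x - h‖ + ‖x + h‖ - 2 * ‖x‖ = 0) :
    x = ‖h‖⁻¹ • h ∨ x = -(‖h‖⁻¹ • h) := by
  have hsum : ‖(x - h) + (x + h)‖ = ‖x - h‖ + ‖x + h‖ := by
    have he : (x - h) + (x + h) = (2:ℝ) • x := by
      rw [two_smul]; abel
    rw [he, norm_smul]
    simp only [Real.norm_ofNat]
    linarith
  have hsr : SameRay ℝ (x - h) (x + h) := sameRay_iff_norm_add.mpr hsum
  obtain ⟨c, r₁, r₂, hr₁, hr₂, hsum12, h1, h2⟩ := hsr.exists_eq_smul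
  have hx2 : (2:ℝ) • x = c := by
    have he : (x - h) + (x + h) = (2:ℝ) • x := by rw [two_smul]; abel
    rw [← he, h1, h2, ← add_smul, hsum12, one_smul]
  have hh2 : (2:ℝ) • h = (r₂ - r₁) • c := by
    have he : (x + h) - (x - h) = (2:ℝ) • h := by rw [two_smul]; abel
    rw [← he, h1, h2, sub_smul]
  set s := r₂ - r₁ with hsdef
  have hhx : h = s • x := by
    have h2' : (2:ℝ) • h = (2:ℝ) • (s • x) := by
      rw [hh2, ← hx2, smul_comm]
    exact smul_right_injective _ (by norm_num : (2:ℝ) ≠ 0) h2'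
  have hs : s ≠ 0 := fun h0 => hh (by rw [hhx, h0, zero_smul])
  have hsn : ‖h‖ = |s| := by rw [hhx, norm_smul, hx, mul_one, Real.norm_eq_abs]
  have hxs : x = s⁻¹ • h := by rw [hhx, smul_smul, inv_mul_cancel₀ hs, one_smul]
  rcases abs_cases s with ⟨h', _⟩ | ⟨h', _⟩
  · left; rw [hxs, hsn, h']
  · right; rw [hxs, hsn, h', inv_neg, neg_smul, neg_neg]

lemma pair_not_one (hd : 3 ≤ d) (ν : Measure (EuclideanSpace ℝ (Fin d))) [IsProbabilityMeasure ν]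
    (hrot : ∀ O : EuclideanSpace ℝ (Fin d) ≃ₗᵢ[ℝ] EuclideanSpace ℝ (Fin d), ν.map O = ν)
    (u : EuclideanSpace ℝ (Fin d)) (hu : ‖u‖ = 1) :
    ν ({u, -u} : Set (EuclideanSpace ℝ (Fin d))) ≠ 1 := by
  intro hone
  have hne : ((ℝ ∙ u)ᗮ : Submodule ℝ (EuclideanSpace ℝ (Fin d))) ≠ ⊥ := by
    intro hbot
    have htop : (ℝ ∙ u : Submodule ℝ (EuclideanSpace ℝ (Fin d))) = ⊤ := by
      rwa [Submodule.orthogonal_eq_bot_iff] at hbot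
    have h1 : Module.finrank ℝ (ℝ ∙ u : Submodule ℝ (EuclideanSpace ℝ (Fin d))) = 1 :=
      finrank_span_singleton (by intro h0; rw [h0, norm_zero] at hu; norm_num at hu)
    rw [htop, finrank_top, finrank_euclideanSpace_fin] at h1
    omega
  obtain ⟨w₀, hw₀mem, hw₀ne⟩ := Submodule.ne_bot_iff _ |>.mp hne
  set w := ‖w₀‖⁻¹ • w₀ with hwdef
  have hw : ‖w‖ = 1 := by
    rw [hwdef, norm_smul, Real.norm_eq_abs, abs_inv, abs_norm,
      inv_mul_cancel₀ (norm_ne_zero_iff.mpr hw₀ne)]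
  have horth : ⟪u, w⟫ = 0 := by
    have := (Submodule.mem_orthogonal _ w₀).mp hw₀mem u (Submodule.mem_span_singleton_self u)
    rw [hwdef, inner_smul_right, this, mul_zero]
  set O := Submodule.reflection (ℝ ∙ (u - w))ᗮ with hOdef
  have hOu : O u = w := Submodule.reflection_sub (by rw [hu, hw])
  have hpre : O ⁻¹' ({w, -w} : Set (EuclideanSpace ℝ (Fin d))) = {u, -u} := by
    ext x
    simp only [Set.mem_preimage, Set.mem_insert_iff, Set.mem_singleton_iff]
    constructor
    · rintro (hx | hx)
      · exact Or.inl (O.injective (hx.trans hOu.symm))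
      · refine Or.inr (O.injective ?_)
        rw [hx, map_neg, hOu]
    · rintro (rfl | rfl)
      · exact Or.inl hOu
      · right; rw [map_neg, hOu]
  have hmu : MeasurableSet ({u, -u} : Set (EuclideanSpace ℝ (Fin d))) :=
    (measurableSet_singleton _).insert _
  have hmw : MeasurableSet ({w, -w} : Set (EuclideanSpace ℝ (Fin d))) :=
    (measurableSet_singleton _).insert _
  have hwone : ν ({w, -w} : Set (EuclideanSpace ℝ (Fin d))) = 1 := by
    have := rot_set ν O (hrot O) hmw
    rw [hpre, hone] at this
    exact this.symm
  have key : ∀ a b : EuclideanSpace ℝ (Fin d), ‖a‖ = 1 → ⟪a, b⟫ = 0 → a ≠ b ∧ a ≠ -b := by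
    intro a b ha hab
    constructor
    · rintro rfl
      rw [real_inner_self_eq_norm_sq, ha] at hab; norm_num at hab
    · intro heq
      have hb : ‖b‖ = 1 := by rw [← norm_neg b, ← heq, ha]
      rw [heq, inner_neg_left, real_inner_self_eq_norm_sq, hb] at hab; norm_num at hab
  obtain ⟨k1, k2⟩ := key u w hu horth
  have hdisj : Disjoint ({u, -u} : Set (EuclideanSpace ℝ (Fin d))) {w, -w} := by
    rw [Set.disjoint_iff]
    rintro x ⟨hx1, hx2⟩
    simp only [Set.mem_insert_iff, Set.mem_singleton_iff] at hx1 hx2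
    rcases hx1 with h1 | h1 <;> rcases hx2 with h2 | h2
    · exact k1 (h1.symm.trans h2)
    · exact k2 (h1.symm.trans h2)
    · exact k2 (by rw [← (h1.symm.trans h2), neg_neg])
    · exact k1 (neg_injective (h1.symm.trans h2))
  have htot := measure_union (μ := ν) hdisj hmw
  rw [hone, hwone] at htot
  have hle : ν (({u, -u} : Set (EuclideanSpace ℝ (Fin d))) ∪ {w, -w}) ≤ 1 := prob_le_one
  rw [htot] at hle
  norm_num at hle

lemma exp_smul_id (c : ℝ) :
    NormedSpace.exp (c • ContinuousLinearMap.id ℝ (EuclideanSpace ℝ (Fin d)))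
      = Real.exp c • ContinuousLinearMap.id ℝ (EuclideanSpace ℝ (Fin d)) := by
  have h1 : c • ContinuousLinearMap.id ℝ (EuclideanSpace ℝ (Fin d))
      = algebraMap ℝ (EuclideanSpace ℝ (Fin d) →L[ℝ] EuclideanSpace ℝ (Fin d)) c := by
    rw [Algebra.algebraMap_eq_smul_one]; rfl
  rw [h1, ← NormedSpace.map_exp (algebraMap ℝ
      (EuclideanSpace ℝ (Fin d) →L[ℝ] EuclideanSpace ℝ (Fin d))) (continuous_algebraMap ℝ _),
    ← Real.exp_eq_exp_ℝ, Algebra.algebraMap_eq_smul_one]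
  rfl

end GMAux

set_option maxHeartbeats 1000000 in
open GMAux in
/-- **Explicit asymptotic covariances for the geometric median of the uniform law on
the sphere** (Section 5.3): if `X` is uniform on the unit sphere of `ℝ^d`, `d ≥ 3`
(i.e. its law is the rotation-invariant probability measure carried by the sphere),
then the geometric median is `m = 0`, `Γ_m = ((d-1)/d)·I`, `Σ' = (1/d)·I`,
`Σ_RM = (1/(2(d-1)))·I` and `Σ = Γ_m⁻¹ Σ' Γ_m⁻¹ = (d/(d-1)²)·I`. -/
theorem geometric_median_uniform_sphere
    (d : ℕ) (hd : 3 ≤ d)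
    (ν : Measure (EuclideanSpace ℝ (Fin d))) [IsProbabilityMeasure ν]
    -- X uniform on the unit sphere : carried by the sphere and rotation invariant
    (hsphere : ν (Metric.sphere (0 : EuclideanSpace ℝ (Fin d)) 1) = 1)
    (hrot : ∀ O : EuclideanSpace ℝ (Fin d) ≃ₗᵢ[ℝ] EuclideanSpace ℝ (Fin d),
      ν.map O = ν)
    -- the median objective
    (G₀ : EuclideanSpace ℝ (Fin d) → ℝ)
    (hG₀ : ∀ h, G₀ h = ∫ x, (‖x - h‖ - ‖x‖) ∂ν)
    -- the Hessian at m = 0 and the covariance Σ'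
    (Γm Sp : EuclideanSpace ℝ (Fin d) →L[ℝ] EuclideanSpace ℝ (Fin d))
    (hΓm : Γm = ∫ x, (‖x‖⁻¹ • ContinuousLinearMap.id ℝ (EuclideanSpace ℝ (Fin d))
      - (‖x‖⁻¹ ^ 3) • outer x x) ∂ν)
    (hSp : Sp = ∫ x, outer (‖x‖⁻¹ • x) (‖x‖⁻¹ • x) ∂ν) :
    -- m = 0 is the unique geometric median
    (∀ h, G₀ 0 ≤ G₀ h) ∧ (∀ h, (∀ h', G₀ h ≤ G₀ h') → h = 0) ∧
    -- Γ_m = ((d-1)/d) I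
    Γm = (((d:ℝ) - 1) / (d:ℝ)) • ContinuousLinearMap.id ℝ (EuclideanSpace ℝ (Fin d)) ∧
    -- Σ' = (1/d) I
    Sp = ((d:ℝ))⁻¹ • ContinuousLinearMap.id ℝ (EuclideanSpace ℝ (Fin d)) ∧
    -- Σ_RM = ∫_0^∞ e^{-sΓ_m} Σ' e^{-sΓ_m} ds = (1/(2(d-1))) I
    (∫ s in Set.Ioi (0:ℝ),
        (NormedSpace.exp (-(s • Γm))).comp (Sp.comp (NormedSpace.exp (-(s • Γm)))))
      = (1 / (2 * ((d:ℝ) - 1))) • ContinuousLinearMap.id ℝ (EuclideanSpace ℝ (Fin d)) ∧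
    -- Σ = Γ_m⁻¹ Σ' Γ_m⁻¹ = (d/(d-1)²) I
    (∃ Γinv : EuclideanSpace ℝ (Fin d) →L[ℝ] EuclideanSpace ℝ (Fin d),
      Γinv.comp Γm = ContinuousLinearMap.id ℝ (EuclideanSpace ℝ (Fin d)) ∧
      Γm.comp Γinv = ContinuousLinearMap.id ℝ (EuclideanSpace ℝ (Fin d)) ∧
      Γinv.comp (Sp.comp Γinv)
        = ((d:ℝ) / ((d:ℝ) - 1) ^ 2) • ContinuousLinearMap.id ℝ (EuclideanSpace ℝ (Fin d))) := by
  have hae := ae_norm_one ν hsphere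
  have hdR : (0:ℝ) < (d:ℝ) := by
    have : 0 < d := by omega
    exact_mod_cast this
  have hd1 : (0:ℝ) < (d:ℝ) - 1 := by
    have : (3:ℝ) ≤ (d:ℝ) := by exact_mod_cast hd
    linarith
  -- the basic operator integral
  have hIO := integral_outer (by omega) ν hsphere hrot
  have hio : Integrable (fun x : EuclideanSpace ℝ (Fin d) => outer x x) ν := by
    refine integrable_of_bdd ν cont_outer (C := 1) ?_
    filter_upwards [hae] with x hx
    exact (norm_outer_le x x).trans (by rw [hx]; norm_num)
  -- Σ' = (1/d) I
  have hSpEq : Sp = ((d:ℝ))⁻¹ • ContinuousLinearMap.id ℝ (EuclideanSpace ℝ (Fin d)) := by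
    rw [hSp, ← hIO]
    apply integral_congr_ae
    filter_upwards [hae] with x hx
    rw [hx]
    norm_num
  -- Γ_m = ((d-1)/d) I
  have hΓmEq : Γm = (((d:ℝ) - 1) / (d:ℝ)) • ContinuousLinearMap.id ℝ
      (EuclideanSpace ℝ (Fin d)) := by
    have hconst : Integrable (fun _ : EuclideanSpace ℝ (Fin d) =>
        ContinuousLinearMap.id ℝ (EuclideanSpace ℝ (Fin d))) ν := integrable_const _
    have h1 : Γm = ∫ x, (ContinuousLinearMap.id ℝ (EuclideanSpace ℝ (Fin d)) - outer x x) ∂ν := by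
      rw [hΓm]
      apply integral_congr_ae
      filter_upwards [hae] with x hx
      rw [hx]
      norm_num
    rw [h1, integral_sub hconst hio, integral_const, probReal_univ,
      one_smul, hIO]
    have h2 : (((d:ℝ) - 1) / (d:ℝ)) = 1 - ((d:ℝ))⁻¹ := by field_simp
    rw [h2]
    module
  -- median facts
  have hG0 : G₀ 0 = 0 := by rw [hG₀]; simp
  have hintf : ∀ h : EuclideanSpace ℝ (Fin d),
      Integrable (fun x : EuclideanSpace ℝ (Fin d) => ‖x - h‖ - ‖x‖) ν := by
    intro h
    refine integrable_of_bdd ν ?_ (C := ‖h‖) ?_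
    · exact ((continuous_id.sub continuous_const).norm).sub continuous_norm
    · filter_upwards with x
      rw [Real.norm_eq_abs]
      calc |‖x - h‖ - ‖x‖| ≤ ‖(x - h) - x‖ := abs_norm_sub_norm_le _ _
        _ = ‖h‖ := by rw [show (x - h) - x = -h by abel, norm_neg]
  have hintf' : ∀ h : EuclideanSpace ℝ (Fin d),
      Integrable (fun x : EuclideanSpace ℝ (Fin d) => ‖x + h‖ - ‖x‖) ν := by
    intro h
    have := hintf (-h)
    simpa [sub_neg_eq_add] using this
  have hneg : ∀ h : EuclideanSpace ℝ (Fin d),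
      ∫ x, (‖x + h‖ - ‖x‖) ∂ν = ∫ x, (‖x - h‖ - ‖x‖) ∂ν := by
    intro h
    have hneg' := rot_integral ν (LinearIsometryEquiv.neg ℝ) (hrot _)
      (fun x => ‖x - h‖ - ‖x‖)
    have he : ∀ x : EuclideanSpace ℝ (Fin d),
        ‖(LinearIsometryEquiv.neg ℝ x : EuclideanSpace ℝ (Fin d)) - h‖
          - ‖(LinearIsometryEquiv.neg ℝ x : EuclideanSpace ℝ (Fin d))‖
        = ‖x + h‖ - ‖x‖ := by
      intro x
      have hcoe : (LinearIsometryEquiv.neg ℝ x : EuclideanSpace ℝ (Fin d)) = -x := rfl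
      rw [hcoe, norm_neg, show -x - h = -(x + h) by abel, norm_neg]
    simp only [he] at hneg'
    exact hneg'
  have gnn : ∀ (h x : EuclideanSpace ℝ (Fin d)), 0 ≤ ‖x - h‖ + ‖x + h‖ - 2 * ‖x‖ := by
    intro h x
    have h1 : ‖(x - h) + (x + h)‖ ≤ ‖x - h‖ + ‖x + h‖ := norm_add_le _ _
    have h2 : (x - h) + (x + h) = (2:ℝ) • x := by rw [two_smul]; abel
    rw [h2, norm_smul, Real.norm_ofNat] at h1
    linarith
  have hgi : ∀ h : EuclideanSpace ℝ (Fin d),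
      Integrable (fun x : EuclideanSpace ℝ (Fin d) => ‖x - h‖ + ‖x + h‖ - 2 * ‖x‖) ν := by
    intro h
    refine ((hintf h).add (hintf' h)).congr (ae_of_all _ fun x => ?_)
    simp only [Pi.add_apply]
    ring
  have htwo : ∀ h : EuclideanSpace ℝ (Fin d),
      2 * G₀ h = ∫ x, (‖x - h‖ + ‖x + h‖ - 2 * ‖x‖) ∂ν := by
    intro h
    have h1 : ∫ x, (‖x - h‖ + ‖x + h‖ - 2 * ‖x‖) ∂ν
        = (∫ x, (‖x - h‖ - ‖x‖) ∂ν) + ∫ x, (‖x + h‖ - ‖x‖) ∂ν := by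
      rw [← integral_add (hintf h) (hintf' h)]
      apply integral_congr_ae
      filter_upwards with x
      ring
    rw [h1, hneg h, ← hG₀ h]
    ring
  have hmin0 : ∀ h, G₀ 0 ≤ G₀ h := by
    intro h
    have h1 : 0 ≤ ∫ x, (‖x - h‖ + ‖x + h‖ - 2 * ‖x‖) ∂ν :=
      integral_nonneg (fun x => gnn h x)
    rw [← htwo h] at h1
    rw [hG0]
    linarith
  refine ⟨hmin0, ?_, hΓmEq, hSpEq, ?_, ?_⟩
  · -- uniqueness
    intro h hmin
    by_contra hne
    have hle : G₀ h ≤ 0 := hG0 ▸ hmin 0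
    have hnn : 0 ≤ ∫ x, (‖x - h‖ + ‖x + h‖ - 2 * ‖x‖) ∂ν :=
      integral_nonneg (fun x => gnn h x)
    have hzero : ∫ x, (‖x - h‖ + ‖x + h‖ - 2 * ‖x‖) ∂ν = 0 := by
      have := htwo h
      linarith
    have hg0 := (integral_eq_zero_iff_of_nonneg (fun x => gnn h x) (hgi h)).mp hzero
    set u := ‖h‖⁻¹ • h with hudef
    have hin : ∀ᵐ x ∂ν, x ∈ ({u, -u} : Set (EuclideanSpace ℝ (Fin d))) := by
      filter_upwards [hae, hg0] with x h1 h2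
      have h2' : ‖x - h‖ + ‖x + h‖ - 2 * ‖x‖ = 0 := h2
      rcases same_ray_case hne h1 h2' with h' | h' <;>
        simp [Set.mem_insert_iff, h', hudef]
    have hmu : MeasurableSet ({u, -u} : Set (EuclideanSpace ℝ (Fin d))) :=
      (measurableSet_singleton _).insert _
    have hc : ν (({u, -u} : Set (EuclideanSpace ℝ (Fin d)))ᶜ) = 0 := by
      rw [MeasureTheory.ae_iff] at hin
      exact hin
    have hcompl := measure_compl hmu (measure_ne_top ν _)
    rw [hc, measure_univ] at hcompl
    have hge : (1 : ENNReal) ≤ ν ({u, -u} : Set (EuclideanSpace ℝ (Fin d))) := by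
      rwa [eq_comm, tsub_eq_zero_iff_le] at hcompl
    have huone : ν ({u, -u} : Set (EuclideanSpace ℝ (Fin d))) = 1 :=
      le_antisymm prob_le_one hge
    have hu1 : ‖u‖ = 1 := by
      rw [hudef, norm_smul, Real.norm_eq_abs, abs_inv, abs_norm,
        inv_mul_cancel₀ (norm_ne_zero_iff.mpr hne)]
    exact pair_not_one hd ν hrot u hu1 huone
  · -- Σ_RM
    set c : ℝ := ((d:ℝ) - 1) / (d:ℝ) with hcdef
    have hc : 0 < c := div_pos hd1 hdR
    have hexp : ∀ s : ℝ, NormedSpace.exp (-(s • Γm))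
        = Real.exp (-(s * c)) • ContinuousLinearMap.id ℝ (EuclideanSpace ℝ (Fin d)) := by
      intro s
      rw [hΓmEq, smul_smul, ← neg_smul (s * c) (ContinuousLinearMap.id ℝ (EuclideanSpace ℝ (Fin d)))]
      exact exp_smul_id _
    have hF : (fun s : ℝ => (NormedSpace.exp (-(s • Γm))).comp
        (Sp.comp (NormedSpace.exp (-(s • Γm)))))
        = fun s : ℝ => (Real.exp (-(2 * c * s)) * (d:ℝ)⁻¹) • ContinuousLinearMap.id ℝ
          (EuclideanSpace ℝ (Fin d)) := by
      funext s
      rw [hexp s, hSpEq]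
      simp only [ContinuousLinearMap.smul_comp, ContinuousLinearMap.comp_smul,
        ContinuousLinearMap.id_comp, smul_smul]
      congr 1
      rw [show -(2 * c * s) = -(s * c) + -(s * c) by ring, Real.exp_add]
      ring
    rw [hF, integral_smul_const]
    have hI : ∫ s in Set.Ioi (0:ℝ), Real.exp (-(2 * c * s)) * (d:ℝ)⁻¹
        = (2 * c)⁻¹ * (d:ℝ)⁻¹ := by
      rw [integral_mul_const]
      congr 1
      have h2c : 0 < 2 * c := by linarith
      have := integral_comp_mul_left_Ioi (fun x => Real.exp (-x)) 0 h2c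
      rw [mul_zero] at this
      calc ∫ s in Set.Ioi (0:ℝ), Real.exp (-(2 * c * s))
          = (2 * c)⁻¹ • ∫ x in Set.Ioi (0:ℝ), Real.exp (-x) := this
        _ = (2 * c)⁻¹ := by rw [integral_exp_neg_Ioi_zero, smul_eq_mul, mul_one]
    rw [hI]
    congr 1
    rw [hcdef]
    field_simp
  · -- Σ = Γ⁻¹ Σ' Γ⁻¹
    refine ⟨((d:ℝ) / ((d:ℝ) - 1)) • ContinuousLinearMap.id ℝ (EuclideanSpace ℝ (Fin d)),
      ?_, ?_, ?_⟩ <;>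
      (try rw [hΓmEq]) <;> (try rw [hSpEq])
    · simp only [ContinuousLinearMap.smul_comp, ContinuousLinearMap.comp_smul,
        ContinuousLinearMap.id_comp, smul_smul]
      rw [show (((d:ℝ) - 1) / (d:ℝ) * ((d:ℝ) / ((d:ℝ) - 1))) = 1 by field_simp, one_smul]
    · simp only [ContinuousLinearMap.smul_comp, ContinuousLinearMap.comp_smul,
        ContinuousLinearMap.id_comp, smul_smul]
      rw [show ((d:ℝ) / ((d:ℝ) - 1) * (((d:ℝ) - 1) / (d:ℝ))) = 1 by field_simp, one_smul]
    · simp only [ContinuousLinearMap.smul_comp, ContinuousLinearMap.comp_smul,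
        ContinuousLinearMap.id_comp, smul_smul]
      congr 1
      field_simp
end
end
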